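/- arXiv:2512.13585 — 6 statements merged into one kernel-verified Lean document; each statement's English description precedes it below -/
import Mathlib

section
/- Let T be a transmission irregular tree and let v be a vertex of T having the minimum transmission among all vertices of T. Then the degree of v in T is at least 3. -/
open SimpleGraph

variable {V : Type*}

/-- The transmission of a vertex `v`: the sum of distances from `v` to all vertices. -/
noncomputable def transmission (G : SimpleGraph V) [Fintype V] (v : V) : ℕ :=
  ∑ u : V, G.dist v u

/-- The Wiener index: the sum of distances over all unordered pairs of vertices. -/
noncomputable def wienerIndex (G : SimpleGraph V) [Fintype V] : ℕ :=
  (∑ u : V, ∑ w : V, G.dist u w) / 2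

/-- A graph on at least two vertices is transmission irregular if all of its vertices
have pairwise distinct transmissions. -/
def TransIrregular (G : SimpleGraph V) [Fintype V] : Prop :=
  2 ≤ Fintype.card V ∧ Function.Injective (transmission G)

/-- The degree of a vertex. -/
noncomputable def vertexDegree (G : SimpleGraph V) (v : V) : ℕ :=
  Nat.card (G.neighborSet v)

/-- A natural number is a perfect square. -/
def IsPerfectSquare (m : ℕ) : Prop := ∃ t : ℕ, m = t * t

/-- The starlike tree `S(a, b, c)`: three pendent paths of lengths `a`, `b`, `c`
emanating from a common central vertex (vertex `0`).  The first branch consists of the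
vertices `1, …, a`, the second of `a+1, …, a+b` and the third of `a+b+1, …, a+b+c`. -/
def starlike (a b c : ℕ) : SimpleGraph (Fin (a + b + c + 1)) :=
  SimpleGraph.fromRel (fun x y =>
    (y.val = x.val + 1 ∧ x.val ≠ a ∧ x.val ≠ a + b) ∨
    (x.val = 0 ∧ (y.val = a + 1 ∨ y.val = a + b + 1)))

/-- The ordinary caterpillar `C_m(a, b)`: the path `v_1 v_2 ⋯ v_m` (vertices `0, …, m-1`)
together with one new leaf attached to `v_a` (the vertex `m`, attached to `a-1`) and one new
leaf attached to `v_b` (the vertex `m+1`, attached to `b-1`). -/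
def caterpillar2 (m a b : ℕ) : SimpleGraph (Fin (m + 2)) :=
  SimpleGraph.fromRel (fun x y =>
    (y.val = x.val + 1 ∧ y.val < m) ∨
    (x.val = a - 1 ∧ y.val = m) ∨
    (x.val = b - 1 ∧ y.val = m + 1))

/-- The variant caterpillar `C_m(a, 2; b, 1)`: the path `v_1 v_2 ⋯ v_m`
(vertices `0, …, m-1`) together with a pendent path of length two attached to `v_a`
(vertices `m` and `m+1`) and a pendent path of length one attached to `v_b`
(the vertex `m+2`). -/
def varCaterpillar (m a b : ℕ) : SimpleGraph (Fin (m + 3)) :=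
  SimpleGraph.fromRel (fun x y =>
    (y.val = x.val + 1 ∧ y.val < m) ∨
    (x.val = a - 1 ∧ y.val = m) ∨
    (x.val = m ∧ y.val = m + 1) ∨
    (x.val = b - 1 ∧ y.val = m + 2))

/-- `T` is a transmission irregular tree of order `n` attaining the maximum Wiener
index among all transmission irregular trees of order `n`. -/
def MaxTITree (n : ℕ) (T : SimpleGraph (Fin n)) : Prop :=
  T.IsTree ∧ TransIrregular T ∧
    ∀ T' : SimpleGraph (Fin n), T'.IsTree → TransIrregular T' →
      wienerIndex T' ≤ wienerIndex T

/-- The graph `X` is, up to isomorphism, the unique transmission irregular tree of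
order `n` attaining the maximum Wiener index. -/
def UniqueMaxTITree (n : ℕ) {m : ℕ} (X : SimpleGraph (Fin m)) : Prop :=
  (∃ T : SimpleGraph (Fin n), MaxTITree n T ∧ Nonempty (T ≃g X)) ∧
    ∀ T : SimpleGraph (Fin n), MaxTITree n T → Nonempty (T ≃g X)

lemma tree_path_length_eq_dist' {T : SimpleGraph V} (hT : T.IsTree) {a b : V}
    (p : T.Walk a b) (hp : p.IsPath) : p.length = T.dist a b := by
  obtain ⟨q, hq⟩ := hT.isConnected.exists_walk_length_eq_dist a b
  have hqp : q.IsPath := q.isPath_of_length_eq_dist hq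
  have := (hT.existsUnique_path a b).unique hp hqp
  rw [this, hq]

lemma step_dichotomy' {T : SimpleGraph V} (hT : T.IsTree) {v u : V} (h : T.Adj v u) (x : V) :
    T.dist u x + 1 = T.dist v x ∨ T.dist v x + 1 = T.dist u x := by
  classical
  obtain ⟨p, hp⟩ := hT.isConnected.exists_walk_length_eq_dist u x
  have hpp : p.IsPath := p.isPath_of_length_eq_dist hp
  by_cases hv : v ∈ p.support
  · right
    have ht : (p.takeUntil v hv).length = T.dist u v :=
      tree_path_length_eq_dist' hT _ (hpp.takeUntil hv)
    have hd : (p.dropUntil v hv).length = T.dist v x :=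
      tree_path_length_eq_dist' hT _ (hpp.dropUntil hv)
    have hsplit := congrArg Walk.length (p.take_spec hv)
    rw [Walk.length_append] at hsplit
    have h3 : T.dist u v = 1 := dist_eq_one_iff_adj.mpr h.symm
    omega
  · left
    have hc : (Walk.cons h p).IsPath := hpp.cons hv
    have := tree_path_length_eq_dist' hT _ hc
    simp only [Walk.length_cons] at this
    omega

lemma down_step' {T : SimpleGraph V} (hc : T.Connected) {v x : V} (hx : x ≠ v) :
    ∃ u, T.Adj v u ∧ T.dist u x + 1 = T.dist v x := by
  obtain ⟨p, hp⟩ := hc.exists_walk_length_eq_dist v x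
  cases p with
  | nil => exact absurd rfl hx.symm
  | @cons _ u _ h q =>
    refine ⟨u, h, ?_⟩
    have h1 : T.dist u x ≤ q.length := dist_le q
    have h2 : T.dist v x ≤ T.dist v u + T.dist u x := hc.dist_triangle
    have h3 : T.dist v u = 1 := dist_eq_one_iff_adj.mpr h
    simp only [Walk.length_cons] at hp
    omega

lemma no_v_in_shortest' {T : SimpleGraph V} {v u x : V} (h : T.Adj v u)
    (hd : T.dist u x + 1 = T.dist v x) {p : T.Walk u x} (hp : p.length = T.dist u x) :
    v ∉ p.support := by
  classical
  intro hv
  have h1 : T.dist u v ≤ (p.takeUntil v hv).length := dist_le _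
  have h2 : T.dist v x ≤ (p.dropUntil v hv).length := dist_le _
  have hsplit := congrArg Walk.length (p.take_spec hv)
  rw [Walk.length_append] at hsplit
  have h3 : T.dist u v = 1 := dist_eq_one_iff_adj.mpr h.symm
  omega

lemma not_both_down' {T : SimpleGraph V} (hT : T.IsTree) {v u w x : V}
    (hu : T.Adj v u) (hw : T.Adj v w) (huw : u ≠ w)
    (hdu : T.dist u x + 1 = T.dist v x) (hdw : T.dist w x + 1 = T.dist v x) : False := by
  obtain ⟨p, hp⟩ := hT.isConnected.exists_walk_length_eq_dist u x
  obtain ⟨q, hq⟩ := hT.isConnected.exists_walk_length_eq_dist w x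
  have hpp : p.IsPath := p.isPath_of_length_eq_dist hp
  have hqp : q.IsPath := q.isPath_of_length_eq_dist hq
  have hvp : v ∉ p.support := no_v_in_shortest' hu hdu hp
  have hvq : v ∉ q.support := no_v_in_shortest' hw hdw hq
  have hcu : (Walk.cons hu p).IsPath := hpp.cons hvp
  have hcw : (Walk.cons hw q).IsPath := hqp.cons hvq
  have heq := (hT.existsUnique_path v x).unique hcu hcw
  have := congrArg Walk.support heq
  rw [Walk.support_cons, Walk.support_cons, p.support_eq_cons, q.support_eq_cons] at this
  simp only [List.cons.injEq] at this
  exact huw this.2.1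

lemma neighbor_transmission [Fintype V] {T : SimpleGraph V} (hT : T.IsTree) {v u : V}
    (h : T.Adj v u) (A : Finset V) (hA : ∀ x, x ∈ A ↔ T.dist u x + 1 = T.dist v x) :
    (transmission T u : ℤ) =
      (transmission T v : ℤ) + Fintype.card V - 2 * A.card := by
  classical
  have key : ∀ x : V, (T.dist u x : ℤ) = (T.dist v x : ℤ) + (if x ∈ A then -1 else 1) := by
    intro x
    by_cases hx : x ∈ A
    · have := (hA x).mp hx
      simp only [if_pos hx]; omega
    · have := (step_dichotomy' hT h x).resolve_left (fun hc => hx ((hA x).mpr hc))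
      simp only [if_neg hx]; omega
  have hsum : (transmission T u : ℤ) =
      (transmission T v : ℤ) + ∑ x : V, (if x ∈ A then (-1 : ℤ) else 1) := by
    unfold transmission
    push_cast
    rw [← Finset.sum_add_distrib]
    exact Finset.sum_congr rfl fun x _ => key x
  have hite : ∑ x : V, (if x ∈ A then (-1 : ℤ) else 1)
      = (Fintype.card V : ℤ) - 2 * A.card := by
    have : ∀ x : V, (if x ∈ A then (-1 : ℤ) else 1)
        = 1 - 2 * (if x ∈ A then (1 : ℤ) else 0) := by
      intro x; split <;> norm_num
    rw [Finset.sum_congr rfl fun x _ => this x, Finset.sum_sub_distrib]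
    rw [← Finset.mul_sum, Finset.sum_boole, Finset.sum_const]
    simp [Finset.filter_mem_eq_inter]
  rw [hsum, hite]; ring

/-- In a transmission irregular tree, any vertex of minimum transmission
has degree at least 3. -/
theorem min_transmission_vertex_degree_ge_three [Fintype V] (T : SimpleGraph V)
    (hT : T.IsTree) (hTI : TransIrregular T) (v : V)
    (hmin : ∀ u : V, transmission T v ≤ transmission T u) :
    3 ≤ vertexDegree T v := by
  classical
  show 3 ≤ Nat.card (T.neighborSet v)
  by_contra hdeg
  push_neg at hdeg
  have hconn := hT.isConnected
  have hn : 2 ≤ Fintype.card V := hTI.1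
  have hstrict : ∀ a : V, a ≠ v → transmission T v + 1 ≤ transmission T a := by
    intro a ha
    have h1 := hmin a
    have hne : transmission T v ≠ transmission T a := fun he => ha (hTI.2 he).symm
    omega
  obtain ⟨x0, hx0⟩ := Fintype.exists_ne_of_one_lt_card (by omega) v
  obtain ⟨u0, hu0, -⟩ := down_step' hconn hx0
  have hfin : (T.neighborSet v).Finite := Set.toFinite _
  have hpos : 0 < (T.neighborSet v).ncard := (Set.ncard_pos hfin).mpr ⟨u0, hu0⟩
  have hvd : Nat.card (T.neighborSet v) = (T.neighborSet v).ncard :=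
    Nat.card_coe_set_eq _
  have hcases : (T.neighborSet v).ncard = 1 ∨ (T.neighborSet v).ncard = 2 := by omega
  rcases hcases with h1 | h2
  · obtain ⟨u, hu⟩ := Set.ncard_eq_one.mp h1
    have hadj : T.Adj v u := by
      rw [← T.mem_neighborSet, hu]; rfl
    set A := Finset.univ.filter (fun x => T.dist u x + 1 = T.dist v x) with hAdef
    have hA : ∀ x, x ∈ A ↔ T.dist u x + 1 = T.dist v x := by
      intro x; simp [hAdef]
    have hAeq : A = Finset.univ.erase v := by
      ext x
      simp only [Finset.mem_erase, Finset.mem_univ, and_true]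
      rw [hA]
      constructor
      · intro hx hxv
        subst hxv
        have h0 : T.dist x x = 0 := dist_self
        omega
      · intro hx
        obtain ⟨u', hu', hd⟩ := down_step' hconn hx
        have heq : u' = u := by
          have hm : u' ∈ T.neighborSet v := hu'
          rw [hu] at hm; exact hm
        rwa [heq] at hd
    have hid := neighbor_transmission hT hadj A hA
    have hAcard : A.card + 1 = Fintype.card V := by
      rw [hAeq, Finset.card_erase_of_mem (Finset.mem_univ v), Finset.card_univ]
      omega
    have hs := hstrict u hadj.ne'
    omega
  · obtain ⟨u, w, huw, hset⟩ := Set.ncard_eq_two.mp h2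
    have hadu : T.Adj v u := by
      rw [← T.mem_neighborSet, hset]; exact Set.mem_insert _ _
    have hadw : T.Adj v w := by
      rw [← T.mem_neighborSet, hset]; exact Set.mem_insert_iff.mpr (Or.inr rfl)
    set Au := Finset.univ.filter (fun x => T.dist u x + 1 = T.dist v x) with hAudef
    set Aw := Finset.univ.filter (fun x => T.dist w x + 1 = T.dist v x) with hAwdef
    have hAu : ∀ x, x ∈ Au ↔ T.dist u x + 1 = T.dist v x := by
      intro x; simp [hAudef]
    have hAw : ∀ x, x ∈ Aw ↔ T.dist w x + 1 = T.dist v x := by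
      intro x; simp [hAwdef]
    have hdisj : Disjoint Au Aw := by
      rw [Finset.disjoint_left]
      intro x hxu hxw
      exact not_both_down' hT hadu hadw huw ((hAu x).mp hxu) ((hAw x).mp hxw)
    have hunion : Au ∪ Aw = Finset.univ.erase v := by
      ext x
      simp only [Finset.mem_union, Finset.mem_erase, Finset.mem_univ, and_true]
      rw [hAu, hAw]
      constructor
      · rintro (hx | hx) <;>
        · intro hxv
          subst hxv
          have h0 : T.dist x x = 0 := dist_self
          omega
      · intro hx
        obtain ⟨u', hu', hd⟩ := down_step' hconn hx
        have hm : u' ∈ ({u, w} : Set V) := by rw [← hset]; exact hu'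
        rcases hm with rfl | rfl
        exacts [Or.inl hd, Or.inr hd]
    have hcards : Au.card + Aw.card + 1 = Fintype.card V := by
      have h3 := Finset.card_union_of_disjoint hdisj
      rw [hunion, Finset.card_erase_of_mem (Finset.mem_univ v), Finset.card_univ] at h3
      omega
    have hidu := neighbor_transmission hT hadu Au hAu
    have hidw := neighbor_transmission hT hadw Aw hAw
    have hsu := hstrict u hadu.ne'
    have hsw := hstrict w hadw.ne'
    have heq : transmission T u = transmission T w := by omega
    exact huw (hTI.2 heq)
end

section
/- Let T be a transmission irregular tree and let v be any vertex of T. If the components of T − v are T_1, …, T_t with |T_k| = a_k for k ∈ {1, …, t}, then a_i ≠ a_j for any two distinct indices i, j ∈ {1, …, t}; that is, the components of T − v have pairwise distinct orders. -/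
open SimpleGraph

variable {V : Type*}

/-- A walk avoiding the complement of `s` induces reachability in `G.induce s`. -/
private lemma reach_of_walk {G : SimpleGraph V} {s : Set V} :
    ∀ {a b : V} (p : G.Walk a b), (∀ x ∈ p.support, x ∈ s) →
      ∀ (ha : a ∈ s) (hb : b ∈ s), (G.induce s).Reachable ⟨a, ha⟩ ⟨b, hb⟩
  | a, _, SimpleGraph.Walk.nil, _, ha, hb => Reachable.refl _
  | a, b, @SimpleGraph.Walk.cons _ _ _ w _ h q, hp, ha, hb => by
    have hw : w ∈ s := hp _ (by simp)
    have hadj : (G.induce s).Adj ⟨a, ha⟩ ⟨w, hw⟩ := h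
    exact hadj.reachable.trans
      (reach_of_walk q (fun x hx => hp x (by simp [hx])) hw hb)

private lemma walk_of_reach {G : SimpleGraph V} {s : Set V} {a b : s}
    (h : (G.induce s).Reachable a b) :
    ∃ p : G.Walk a.val b.val, ∀ x ∈ p.support, x ∈ s := by
  obtain ⟨q⟩ := h
  refine ⟨q.map (Embedding.induce s).toHom, ?_⟩
  intro x hx
  have hx2 : x ∈ (q.map (Embedding.induce s).toHom).support := hx
  rw [SimpleGraph.Walk.support_map] at hx2
  obtain ⟨y, _, rfl⟩ := List.mem_map.mp hx2
  exact y.2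

private lemma length_zero_eq {G : SimpleGraph V} {a b : V} :
    ∀ (q : G.Walk a b), q.length = 0 → a = b
  | SimpleGraph.Walk.nil, _ => rfl
  | SimpleGraph.Walk.cons _ q, h => by simp at h

/-- In a tree, `v` has at most one neighbor in each component of `T - v`. -/
private lemma unique_nbr {T : SimpleGraph V} (hT : T.IsTree) {v u w : V}
    (hu : T.Adj v u) (hw : T.Adj v w)
    (h : ∃ p : T.Walk u w, v ∉ p.support) : u = w := by
  classical
  obtain ⟨p, hp⟩ := h
  have hq : v ∉ p.bypass.support := fun hv => hp (p.support_bypass_subset hv)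
  have hP2 : (SimpleGraph.Walk.cons hu p.bypass).IsPath :=
    p.bypass_isPath.cons hq
  have hP1 : (SimpleGraph.Walk.cons hw (SimpleGraph.Walk.nil)).IsPath := by
    simp [SimpleGraph.Walk.isPath_iff_eq_nil, hw.ne]
  obtain ⟨P, -, hun⟩ := hT.existsUnique_path v w
  have := (hun _ hP2).trans (hun _ hP1).symm
  have hlen := congrArg SimpleGraph.Walk.length this
  simp only [SimpleGraph.Walk.length_cons, SimpleGraph.Walk.length_nil] at hlen
  exact length_zero_eq p.bypass (by omega)

/-- If there is a `u`–`x` walk avoiding `v`, then `dist v x = dist u x + 1`. -/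
private lemma dist_in_comp {T : SimpleGraph V} (hT : T.IsTree) {v u x : V}
    (hu : T.Adj v u) (hx : ∃ p : T.Walk u x, v ∉ p.support) :
    T.dist v x = T.dist u x + 1 := by
  classical
  obtain ⟨p0, hp0⟩ := hx
  have hxv : x ≠ v := fun h => hp0 (h ▸ p0.end_mem_support)
  obtain ⟨p, hp, hlen⟩ := hT.isConnected.exists_path_of_dist v x
  cases p with
  | nil => exact absurd rfl hxv.symm
  | cons h q =>
    rename_i w
    rw [SimpleGraph.Walk.cons_isPath_iff] at hp
    have hwu : w = u := by
      refine unique_nbr hT h hu ⟨q.append p0.reverse, ?_⟩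
      rw [SimpleGraph.Walk.mem_support_append_iff]
      rintro (hv | hv)
      · exact hp.2 hv
      · rw [SimpleGraph.Walk.support_reverse, List.mem_reverse] at hv
        exact hp0 hv
    subst hwu
    rw [SimpleGraph.Walk.length_cons] at hlen
    have h1 : T.dist w x ≤ q.length := SimpleGraph.dist_le q
    have h2 : T.dist v x ≤ T.dist v w + T.dist w x := hT.isConnected.dist_triangle
    have h3 : T.dist v w = 1 := SimpleGraph.dist_eq_one_iff_adj.mpr h
    omega

/-- If every `u`–`x` walk passes through `v`, then `dist u x = dist v x + 1`. -/
private lemma dist_out_comp {T : SimpleGraph V} (hT : T.IsTree) {v u x : V}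
    (hu : T.Adj v u) (hx : ∀ p : T.Walk u x, v ∈ p.support) :
    T.dist u x = T.dist v x + 1 := by
  classical
  obtain ⟨p, -, hlen⟩ := hT.isConnected.exists_path_of_dist u x
  have hv := hx p
  have hsplit := congrArg SimpleGraph.Walk.length (p.take_spec hv)
  rw [SimpleGraph.Walk.length_append] at hsplit
  have h1 : T.dist u v ≤ (p.takeUntil v hv).length := SimpleGraph.dist_le _
  have h2 : T.dist v x ≤ (p.dropUntil v hv).length := SimpleGraph.dist_le _
  have h3 : T.dist u x ≤ T.dist u v + T.dist v x := hT.isConnected.dist_triangle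
  have h4 : T.dist u v = 1 := SimpleGraph.dist_eq_one_iff_adj.mpr hu.symm
  omega

/-- The key transmission identity for a neighbor `u` of `v`. -/
private lemma transmission_key [Fintype V] {T : SimpleGraph V} (hT : T.IsTree) {v u : V}
    (hu : T.Adj v u) :
    transmission T u + 2 * {x : V | ∃ p : T.Walk u x, v ∉ p.support}.ncard
      = transmission T v + Fintype.card V := by
  classical
  set S : Set V := {x : V | ∃ p : T.Walk u x, v ∉ p.support} with hS
  have hfin : S.Finite := Set.toFinite S
  set A : Finset V := hfin.toFinset with hA
  have h1 : ∀ x ∈ A, T.dist v x = T.dist u x + 1 := by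
    intro x hx
    exact dist_in_comp hT hu (hfin.mem_toFinset.mp hx)
  have h2 : ∀ x ∈ Aᶜ, T.dist u x = T.dist v x + 1 := by
    intro x hx
    refine dist_out_comp hT hu ?_
    have : x ∉ S := fun hm => (Finset.mem_compl.mp hx) (hfin.mem_toFinset.mpr hm)
    rw [hS, Set.mem_setOf_eq, not_exists] at this
    exact fun p => not_not.mp (this p)
  have e1 : ∑ x ∈ A, T.dist v x = ∑ x ∈ A, T.dist u x + A.card := by
    rw [Finset.sum_congr rfl h1, Finset.sum_add_distrib]
    simp
  have e2 : ∑ x ∈ Aᶜ, T.dist u x = ∑ x ∈ Aᶜ, T.dist v x + Aᶜ.card := by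
    rw [Finset.sum_congr rfl h2, Finset.sum_add_distrib]
    simp
  have su : ∑ x ∈ A, T.dist u x + ∑ x ∈ Aᶜ, T.dist u x = transmission T u :=
    Finset.sum_add_sum_compl A _
  have sv : ∑ x ∈ A, T.dist v x + ∑ x ∈ Aᶜ, T.dist v x = transmission T v :=
    Finset.sum_add_sum_compl A _
  have hcard : Aᶜ.card = Fintype.card V - A.card := Finset.card_compl A
  have hle : A.card ≤ Fintype.card V := A.card_le_univ
  have hnc : S.ncard = A.card := Set.ncard_eq_toFinset_card S hfin
  omega

/-- The set of vertices reachable from `u` avoiding `v` is the component of `u`. -/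
private lemma S_eq_supp {T : SimpleGraph V} {v u : V} (hu' : u ∈ ({v}ᶜ : Set V)) :
    {x : V | ∃ p : T.Walk u x, v ∉ p.support}
      = Subtype.val ''
        ((T.induce ({v}ᶜ : Set V)).connectedComponentMk ⟨u, hu'⟩).supp := by
  ext x
  constructor
  · rintro ⟨p, hp⟩
    have hx' : x ∈ ({v}ᶜ : Set V) := by
      simp only [Set.mem_compl_iff, Set.mem_singleton_iff]
      exact fun h => hp (h ▸ p.end_mem_support)
    refine ⟨⟨x, hx'⟩, ?_, rfl⟩
    rw [SimpleGraph.ConnectedComponent.mem_supp_iff]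
    refine (SimpleGraph.ConnectedComponent.sound ?_).symm
    refine reach_of_walk p ?_ hu' hx'
    intro y hy
    simp only [Set.mem_compl_iff, Set.mem_singleton_iff]
    exact fun h => hp (h ▸ hy)
  · rintro ⟨y, hy, rfl⟩
    rw [SimpleGraph.ConnectedComponent.mem_supp_iff] at hy
    have hreach := (SimpleGraph.ConnectedComponent.exact hy).symm
    obtain ⟨p, hsupp⟩ := walk_of_reach hreach
    exact ⟨p, fun hv => by simpa using hsupp v hv⟩

private lemma first_step {G : SimpleGraph V} :
    ∀ {a b : V} (p : G.Walk a b), p.IsPath → a ≠ b →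
      ∃ (w : V) (h : G.Adj a w) (q : G.Walk w b), q.IsPath ∧ a ∉ q.support
  | _, _, SimpleGraph.Walk.nil, _, hab => absurd rfl hab
  | _, _, SimpleGraph.Walk.cons h q, hp, _ => by
    rw [SimpleGraph.Walk.cons_isPath_iff] at hp
    exact ⟨_, h, q, hp.1, hp.2⟩

/-- Every component of `T - v` contains a neighbor of `v`. -/
private lemma exists_adj_rep {T : SimpleGraph V} (hT : T.IsTree) (v : V)
    (c : (T.induce ({v}ᶜ : Set V)).ConnectedComponent) :
    ∃ (u : V) (hu : T.Adj v u) (hu' : u ∈ ({v}ᶜ : Set V)),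
      (T.induce ({v}ᶜ : Set V)).connectedComponentMk ⟨u, hu'⟩ = c := by
  obtain ⟨x₀, hx₀⟩ := c.exists_rep
  have hx0v : (x₀ : V) ≠ v := by
    have := x₀.2
    simp only [Set.mem_compl_iff, Set.mem_singleton_iff] at this
    exact this
  obtain ⟨p, hp, -⟩ := hT.isConnected.exists_path_of_dist v (x₀ : V)
  obtain ⟨w, h, q, -, hvq⟩ := first_step p hp hx0v.symm
  have hw' : w ∈ ({v}ᶜ : Set V) := by
    simp only [Set.mem_compl_iff, Set.mem_singleton_iff]
    exact h.ne'
  refine ⟨w, h, hw', ?_⟩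
  have hreach : (T.induce ({v}ᶜ : Set V)).Reachable ⟨w, hw'⟩ ⟨(x₀ : V), x₀.2⟩ := by
    refine reach_of_walk q ?_ hw' x₀.2
    intro y hy
    simp only [Set.mem_compl_iff, Set.mem_singleton_iff]
    exact fun hh => hvq (hh ▸ hy)
  have heq : (⟨(x₀ : V), x₀.2⟩ : ({v}ᶜ : Set V)) = x₀ := Subtype.ext rfl
  rw [← hx₀, ← heq]
  exact SimpleGraph.ConnectedComponent.sound hreach

/-- In a transmission irregular tree `T`, for any vertex `v`, the
components of `T - v` have pairwise distinct orders. -/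
theorem components_of_vertex_deleted_TI_tree_distinct_orders [Fintype V]
    (T : SimpleGraph V) (hT : T.IsTree) (hTI : TransIrregular T) (v : V)
    (c d : (T.induce ({v}ᶜ : Set V)).ConnectedComponent) (hcd : c ≠ d) :
    Nat.card c.supp ≠ Nat.card d.supp := by
  intro hcard
  obtain ⟨u, hu, hu', hcu⟩ := exists_adj_rep hT v c
  obtain ⟨w, hw, hw', hcw⟩ := exists_adj_rep hT v d
  have hSu : {x : V | ∃ p : T.Walk u x, v ∉ p.support}.ncard = Nat.card c.supp := by
    rw [S_eq_supp hu', hcu, Set.ncard_image_of_injective _ Subtype.val_injective,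
      Nat.card_coe_set_eq]
  have hSw : {x : V | ∃ p : T.Walk w x, v ∉ p.support}.ncard = Nat.card d.supp := by
    rw [S_eq_supp hw', hcw, Set.ncard_image_of_injective _ Subtype.val_injective,
      Nat.card_coe_set_eq]
  have k1 := transmission_key hT hu
  have k2 := transmission_key hT hw
  have htrans : transmission T u = transmission T w := by omega
  have huw : u = w := hTI.2 htrans
  subst huw
  exact hcd (hcu ▸ hcw ▸ rfl)
end

section
/- Let T_1 be a tree of order ℓ + 1 > 1 that is not a path, with a vertex v_1 ∈ V(T_1), and let T_2 be a tree on at least 2 vertices with a vertex v_2 ∈ V(T_2). Let T be the tree obtained from disjoint copies of T_1 and T_2 by identifying v_1 with v_2, and let T' be the tree obtained from a disjoint copy of T_2 and a path P_{ℓ+1} on ℓ + 1 vertices by identifying v_2 with an endpoint of P_{ℓ+1}. Then W(T) < W(T'). -/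
open SimpleGraph

variable {V : Type*}

/-- The graph obtained from disjoint copies of `G` and `H` by identifying the vertex
`v` of `G` with the vertex `w` of `H` (the merged vertex is represented by `w`). -/
def glue {W : Type*} (G : SimpleGraph V) (v : V) (H : SimpleGraph W) (w : W) :
    SimpleGraph ({x : V // x ≠ v} ⊕ W) :=
  SimpleGraph.fromRel (fun a b =>
    match a, b with
    | Sum.inl x, Sum.inl y => G.Adj x.val y.val
    | Sum.inl x, Sum.inr z => z = w ∧ G.Adj x.val v
    | Sum.inr _, Sum.inl _ => False
    | Sum.inr z, Sum.inr z' => H.Adj z z')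

section GlueBasics

variable {W : Type*} {G : SimpleGraph V} {H : SimpleGraph W} {v₁ : V} {v₂ : W}

@[simp] lemma glue_adj_inl_inl {x y : {a : V // a ≠ v₁}} :
    (glue G v₁ H v₂).Adj (Sum.inl x) (Sum.inl y) ↔ G.Adj x.val y.val := by
  simp only [glue, fromRel_adj]
  constructor
  · rintro ⟨-, h | h⟩
    · exact h
    · exact h.symm
  · intro h
    exact ⟨fun he => h.ne (congrArg Subtype.val (Sum.inl.inj he)), Or.inl h⟩

@[simp] lemma glue_adj_inl_inr {x : {a : V // a ≠ v₁}} {z : W} :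
    (glue G v₁ H v₂).Adj (Sum.inl x) (Sum.inr z) ↔ z = v₂ ∧ G.Adj x.val v₁ := by
  simp [glue, fromRel_adj]

@[simp] lemma glue_adj_inr_inl {x : {a : V // a ≠ v₁}} {z : W} :
    (glue G v₁ H v₂).Adj (Sum.inr z) (Sum.inl x) ↔ z = v₂ ∧ G.Adj x.val v₁ := by
  rw [adj_comm]; exact glue_adj_inl_inr

@[simp] lemma glue_adj_inr_inr {z z' : W} :
    (glue G v₁ H v₂).Adj (Sum.inr z) (Sum.inr z') ↔ H.Adj z z' := by
  simp only [glue, fromRel_adj]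
  constructor
  · rintro ⟨-, h | h⟩
    · exact h
    · exact h.symm
  · intro h
    exact ⟨by simpa using h.ne, Or.inl h⟩

end GlueBasics

section DistGeneric

variable {U W : Type*}

/-- Walk-length lower bound via a pair of "projections" each edge moving at most one. -/
lemma dist_add_dist_le_walk_length {K : SimpleGraph U} {G : SimpleGraph V} {H : SimpleGraph W}
    {f : U → V} {g : U → W} (hG : G.Connected) (hH : H.Connected)
    (hfg : ∀ a b, K.Adj a b →
      (G.Adj (f a) (f b) ∧ g a = g b) ∨ (f a = f b ∧ H.Adj (g a) (g b)))
    {a b : U} (p : K.Walk a b) :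
    G.dist (f a) (f b) + H.dist (g a) (g b) ≤ p.length := by
  induction p with
  | nil => simp
  | @cons a c b hac q ih =>
    rcases hfg a c hac with ⟨h1, h2⟩ | ⟨h1, h2⟩
    · have t1 : G.dist (f a) (f b) ≤ 1 + G.dist (f c) (f b) := by
        calc G.dist (f a) (f b) ≤ G.dist (f a) (f c) + G.dist (f c) (f b) :=
              hG.dist_triangle
          _ ≤ 1 + G.dist (f c) (f b) :=
              Nat.add_le_add_right (le_of_eq (dist_eq_one_iff_adj.mpr h1)) _
      have t2 : H.dist (g a) (g b) = H.dist (g c) (g b) := by rw [h2]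
      simp only [SimpleGraph.Walk.length_cons]
      omega
    · have t1 : G.dist (f a) (f b) = G.dist (f c) (f b) := by rw [h1]
      have t2 : H.dist (g a) (g b) ≤ 1 + H.dist (g c) (g b) := by
        calc H.dist (g a) (g b) ≤ H.dist (g a) (g c) + H.dist (g c) (g b) :=
              hH.dist_triangle
          _ ≤ 1 + H.dist (g c) (g b) :=
              Nat.add_le_add_right (le_of_eq (dist_eq_one_iff_adj.mpr h2)) _
      simp only [SimpleGraph.Walk.length_cons]
      omega

end DistGeneric

section GlueDist

variable {W : Type*} [DecidableEq V] {G : SimpleGraph V} {H : SimpleGraph W} {v₁ : V} {v₂ : W}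

/-- The left injection `V → {x // x ≠ v₁} ⊕ W`, sending `v₁` to `inr v₂`. -/
def glueL (v₁ : V) (v₂ : W) (x : V) : ({x : V // x ≠ v₁} ⊕ W) :=
  if h : x = v₁ then Sum.inr v₂ else Sum.inl ⟨x, h⟩

@[simp] lemma glueL_v₁ : glueL v₁ v₂ v₁ = Sum.inr v₂ := by simp [glueL]

lemma glueL_ne {x : V} (h : x ≠ v₁) : glueL v₁ v₂ x = Sum.inl ⟨x, h⟩ := by simp [glueL, h]

/-- Left projection `{x // x ≠ v₁} ⊕ W → V`. -/
def glueP₁ (v₁ : V) : ({x : V // x ≠ v₁} ⊕ W) → V := Sum.elim Subtype.val (fun _ => v₁)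

/-- Right projection `{x // x ≠ v₁} ⊕ W → W`. -/
def glueP₂ (v₂ : W) : ({x : V // x ≠ v₁} ⊕ W) → W := Sum.elim (fun _ => v₂) id

lemma glue_proj_adj (a b : ({x : V // x ≠ v₁} ⊕ W)) (hab : (glue G v₁ H v₂).Adj a b) :
    (G.Adj (glueP₁ v₁ a) (glueP₁ v₁ b) ∧ glueP₂ v₂ a = glueP₂ v₂ b) ∨
      (glueP₁ v₁ a = glueP₁ v₁ b ∧ H.Adj (glueP₂ v₂ a) (glueP₂ v₂ b)) := by
  rcases a with x | z <;> rcases b with y | z'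
  · exact Or.inl ⟨by simpa [glueP₁] using hab, rfl⟩
  · rw [glue_adj_inl_inr] at hab
    exact Or.inl ⟨by simpa [glueP₁] using hab.2, by simp [glueP₂, hab.1]⟩
  · rw [glue_adj_inr_inl] at hab
    exact Or.inl ⟨by simpa [glueP₁] using hab.2.symm, by simp [glueP₂, hab.1]⟩
  · exact Or.inr ⟨rfl, by simpa [glueP₂] using hab⟩

lemma glueL_adj {x y : V} (h : G.Adj x y) :
    (glue G v₁ H v₂).Adj (glueL v₁ v₂ x) (glueL v₁ v₂ y) := by
  by_cases hx : x = v₁ <;> by_cases hy : y = v₁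
  · exact absurd (hx.trans hy.symm) h.ne
  · subst hx
    rw [glueL_v₁, glueL_ne hy, glue_adj_inr_inl]
    exact ⟨rfl, h.symm⟩
  · subst hy
    rw [glueL_v₁, glueL_ne hx, glue_adj_inl_inr]
    exact ⟨rfl, h⟩
  · rw [glueL_ne hx, glueL_ne hy, glue_adj_inl_inl]
    exact h

/-- The left injection as a graph homomorphism. -/
def glueHomL (G : SimpleGraph V) (H : SimpleGraph W) (v₁ : V) (v₂ : W) :
    G →g (glue G v₁ H v₂) where
  toFun := glueL v₁ v₂
  map_rel' := glueL_adj

/-- The right injection as a graph homomorphism. -/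
def glueHomR (G : SimpleGraph V) (H : SimpleGraph W) (v₁ : V) (v₂ : W) :
    H →g (glue G v₁ H v₂) where
  toFun := Sum.inr
  map_rel' := fun h => by rw [glue_adj_inr_inr]; exact h

lemma glue_dist_le_L (hG : G.Connected) (x y : V) :
    (glue G v₁ H v₂).dist (glueL v₁ v₂ x) (glueL v₁ v₂ y) ≤ G.dist x y := by
  obtain ⟨p, hp⟩ := hG.exists_walk_length_eq_dist x y
  have := SimpleGraph.dist_le (p.map (glueHomL G H v₁ v₂))
  rwa [SimpleGraph.Walk.length_map, hp] at this

lemma glue_dist_le_R (hH : H.Connected) (z z' : W) :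
    (glue G v₁ H v₂).dist (Sum.inr z) (Sum.inr z' : {x : V // x ≠ v₁} ⊕ W) ≤ H.dist z z' := by
  obtain ⟨p, hp⟩ := hH.exists_walk_length_eq_dist z z'
  have := SimpleGraph.dist_le (p.map (glueHomR G H v₁ v₂))
  rwa [SimpleGraph.Walk.length_map, hp] at this

lemma glue_connected (hG : G.Connected) (hH : H.Connected) :
    (glue G v₁ H v₂).Connected := by
  have hne : Nonempty ({x : V // x ≠ v₁} ⊕ W) := ⟨Sum.inr v₂⟩
  rw [connected_iff_exists_forall_reachable]
  refine ⟨Sum.inr v₂, fun b => ?_⟩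
  rcases b with x | z
  · have : (glue G v₁ H v₂).Reachable (glueL v₁ v₂ v₁) (glueL v₁ v₂ x.val) :=
      ((hG v₁ x.val).map (glueHomL G H v₁ v₂))
    rwa [glueL_v₁, glueL_ne x.prop, Subtype.coe_eta] at this
  · exact (hH v₂ z).map (glueHomR G H v₁ v₂)

lemma glue_dist_inl_inl (hG : G.Connected) (hH : H.Connected) (x y : {x : V // x ≠ v₁}) :
    (glue G v₁ H v₂).dist (Sum.inl x) (Sum.inl y) = G.dist x.val y.val := by
  refine le_antisymm ?_ ?_
  · have := glue_dist_le_L (H := H) (v₁ := v₁) (v₂ := v₂) hG x.val y.val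
    rwa [glueL_ne x.prop, glueL_ne y.prop, Subtype.coe_eta, Subtype.coe_eta] at this
  · obtain ⟨p, hp⟩ := (glue_connected hG hH (v₁ := v₁) (v₂ := v₂)).exists_walk_length_eq_dist
      (Sum.inl x) (Sum.inl y)
    have := dist_add_dist_le_walk_length hG hH (glue_proj_adj (G := G) (H := H)) p
    simp only [glueP₁, glueP₂, Sum.elim_inl] at this
    simpa [hp] using le_trans (Nat.le_add_right _ _) this

lemma glue_dist_inr_inr (hG : G.Connected) (hH : H.Connected) (z z' : W) :
    (glue G v₁ H v₂).dist (Sum.inr z) (Sum.inr z' : {x : V // x ≠ v₁} ⊕ W) = H.dist z z' := by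
  refine le_antisymm (glue_dist_le_R hH z z') ?_
  obtain ⟨p, hp⟩ := (glue_connected hG hH (v₁ := v₁) (v₂ := v₂)).exists_walk_length_eq_dist
    (Sum.inr z) (Sum.inr z')
  have := dist_add_dist_le_walk_length hG hH (glue_proj_adj (G := G) (H := H)) p
  simp only [glueP₁, glueP₂, Sum.elim_inr, id] at this
  simpa [hp] using le_trans (Nat.le_add_left _ _) this

lemma glue_dist_inl_inr (hG : G.Connected) (hH : H.Connected) (x : {x : V // x ≠ v₁}) (z : W) :
    (glue G v₁ H v₂).dist (Sum.inl x) (Sum.inr z) = G.dist x.val v₁ + H.dist v₂ z := by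
  refine le_antisymm ?_ ?_
  · calc (glue G v₁ H v₂).dist (Sum.inl x) (Sum.inr z)
        ≤ (glue G v₁ H v₂).dist (Sum.inl x) (Sum.inr v₂)
          + (glue G v₁ H v₂).dist (Sum.inr v₂) (Sum.inr z) :=
          (glue_connected hG hH).dist_triangle
      _ ≤ G.dist x.val v₁ + H.dist v₂ z := by
          refine Nat.add_le_add ?_ (glue_dist_le_R hH v₂ z)
          have := glue_dist_le_L (H := H) (v₁ := v₁) (v₂ := v₂) hG x.val v₁
          rwa [glueL_ne x.prop, glueL_v₁, Subtype.coe_eta] at this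
  · obtain ⟨p, hp⟩ := (glue_connected hG hH (v₁ := v₁) (v₂ := v₂)).exists_walk_length_eq_dist
      (Sum.inl x) (Sum.inr z)
    have := dist_add_dist_le_walk_length hG hH (glue_proj_adj (G := G) (H := H)) p
    simp only [glueP₁, glueP₂, Sum.elim_inl, Sum.elim_inr, id] at this
    simpa [hp] using this

end GlueDist

section SumDist

variable (G : SimpleGraph V)

/-- Twice the Wiener index: the full sum of distances over ordered pairs. -/
noncomputable def sumDist [Fintype V] : ℕ := ∑ u : V, ∑ w : V, G.dist u w

variable {G}

lemma sum_split_ne [Fintype V] [DecidableEq V] (f : V → ℕ) (v : V) :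
    ∑ x : V, f x = f v + ∑ x : {y : V // y ≠ v}, f x.val := by
  rw [← Finset.add_sum_erase _ f (Finset.mem_univ v)]
  congr 1
  rw [Finset.sum_subtype (p := fun y => y ≠ v) _ (fun x => by simp) f]

lemma transmission_eq_sum_subtype [Fintype V] [DecidableEq V] (v : V) :
    transmission G v = ∑ x : {y : V // y ≠ v}, G.dist v x.val := by
  rw [transmission, sum_split_ne (fun u => G.dist v u) v, SimpleGraph.dist_self, zero_add]

lemma sumDist_glue {W : Type*} [Fintype V] [Fintype W] [DecidableEq V]
    {G : SimpleGraph V} {H : SimpleGraph W} {v₁ : V} {v₂ : W}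
    (hG : G.Connected) (hH : H.Connected) :
    sumDist (glue G v₁ H v₂) + 2 * transmission G v₁
      = sumDist G + sumDist H + 2 * (Fintype.card W) * transmission G v₁
        + 2 * (Fintype.card {x : V // x ≠ v₁}) * transmission H v₂ := by
  classical
  set K := glue G v₁ H v₂ with hK
  have hsplit : sumDist K =
      (∑ x : {x : V // x ≠ v₁}, ∑ y : {x : V // x ≠ v₁}, K.dist (Sum.inl x) (Sum.inl y))
      + (∑ x : {x : V // x ≠ v₁}, ∑ z : W, K.dist (Sum.inl x) (Sum.inr z))
      + ((∑ z : W, ∑ x : {x : V // x ≠ v₁}, K.dist (Sum.inr z) (Sum.inl x))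
      + (∑ z : W, ∑ z' : W, K.dist (Sum.inr z) (Sum.inr z'))) := by
    rw [sumDist, Fintype.sum_sum_type]
    congr 1
    · rw [← Finset.sum_add_distrib]
      refine Finset.sum_congr rfl fun x _ => ?_
      rw [Fintype.sum_sum_type]
    · rw [← Finset.sum_add_distrib]
      refine Finset.sum_congr rfl fun z _ => ?_
      rw [Fintype.sum_sum_type]
  have hA : (∑ x : {x : V // x ≠ v₁}, ∑ y : {x : V // x ≠ v₁}, K.dist (Sum.inl x) (Sum.inl y))
      + 2 * transmission G v₁ = sumDist G := by
    have : ∀ x y : {x : V // x ≠ v₁}, K.dist (Sum.inl x) (Sum.inl y) = G.dist x.val y.val :=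
      fun x y => glue_dist_inl_inl hG hH x y
    simp_rw [this]
    rw [sumDist, sum_split_ne (fun u => ∑ w : V, G.dist u w) v₁]
    have h1 : ∀ x : {y : V // y ≠ v₁}, ∑ w : V, G.dist x.val w
        = G.dist x.val v₁ + ∑ y : {y : V // y ≠ v₁}, G.dist x.val y.val :=
      fun x => sum_split_ne (fun w => G.dist x.val w) v₁
    simp_rw [h1]
    rw [Finset.sum_add_distrib]
    have h2 : ∑ x : {y : V // y ≠ v₁}, G.dist x.val v₁ = transmission G v₁ := by
      rw [transmission_eq_sum_subtype]
      exact Finset.sum_congr rfl fun x _ => SimpleGraph.dist_comm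
    rw [h2, ← transmission]
    ring
  have hC : ∀ x : {x : V // x ≠ v₁}, ∀ z : W,
      K.dist (Sum.inl x) (Sum.inr z) = G.dist x.val v₁ + H.dist v₂ z :=
    fun x z => glue_dist_inl_inr hG hH x z
  have hCsum : (∑ x : {x : V // x ≠ v₁}, ∑ z : W, K.dist (Sum.inl x) (Sum.inr z))
      = (Fintype.card W) * transmission G v₁
        + (Fintype.card {x : V // x ≠ v₁}) * transmission H v₂ := by
    have e1 : ∀ x : {x : V // x ≠ v₁}, ∑ z : W, (G.dist x.val v₁ + H.dist v₂ z)
        = Fintype.card W * G.dist x.val v₁ + transmission H v₂ := by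
      intro x
      rw [Finset.sum_add_distrib, Finset.sum_const, Finset.card_univ, smul_eq_mul, transmission]
    simp_rw [hC, e1]
    rw [Finset.sum_add_distrib, Finset.sum_const, Finset.card_univ, smul_eq_mul,
      ← Finset.mul_sum]
    have e2 : ∑ x : {y : V // y ≠ v₁}, G.dist x.val v₁ = transmission G v₁ := by
      rw [transmission_eq_sum_subtype]
      exact Finset.sum_congr rfl fun x _ => SimpleGraph.dist_comm
    rw [e2]
  have hB : (∑ z : W, ∑ z' : W, K.dist (Sum.inr z) (Sum.inr z')) = sumDist H := by
    rw [sumDist]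
    refine Finset.sum_congr rfl fun z _ => Finset.sum_congr rfl fun z' _ => ?_
    exact glue_dist_inr_inr hG hH z z'
  have hC2 : (∑ z : W, ∑ x : {x : V // x ≠ v₁}, K.dist (Sum.inr z) (Sum.inl x))
      = (∑ x : {x : V // x ≠ v₁}, ∑ z : W, K.dist (Sum.inl x) (Sum.inr z)) := by
    rw [Finset.sum_comm]
    exact Finset.sum_congr rfl fun x _ => Finset.sum_congr rfl fun z _ =>
      SimpleGraph.dist_comm
  rw [hC2, hB, hCsum] at hsplit
  rw [mul_assoc 2 (Fintype.card W), mul_assoc 2 (Fintype.card {x : V // x ≠ v₁})]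
  omega

end SumDist

section Transmission

/-- Sum `0 + 1 + ⋯ + (n-1)`. -/
def M (n : ℕ) : ℕ := ∑ k ∈ Finset.range n, k

lemma M_succ (n : ℕ) : M (n + 1) = M n + n := Finset.sum_range_succ _ n

lemma M_key {m n : ℕ} (h1 : 1 ≤ m) (h2 : m < n) : M m + (m - 1) * (n - m) + 1 ≤ M n := by
  induction n with
  | zero => omega
  | succ n ih =>
    rcases Nat.lt_or_ge m n with h | h
    · have hmul : (m - 1) * (n + 1 - m) = (m - 1) * (n - m) + (m - 1) := by
        have he : n + 1 - m = (n - m) + 1 := by omega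
        rw [he, Nat.mul_add, Nat.mul_one]
      have := ih h
      rw [M_succ]
      omega
    · have hm : m = n := by omega
      subst hm
      rw [M_succ]
      have he : m + 1 - m = 1 := by omega
      rw [he, Nat.mul_one]
      omega

variable {G : SimpleGraph V}

lemma exists_adj_dist_succ (hG : G.Connected) {x y : V} {k : ℕ}
    (h : G.dist x y = k + 1) : ∃ x', G.Adj x x' ∧ G.dist x' y = k := by
  obtain ⟨p, hp⟩ := (hG x y).exists_walk_length_eq_dist
  rw [h] at hp
  cases p with
  | nil => simp at hp
  | @cons _ c _ hadj q =>
    rw [SimpleGraph.Walk.length_cons] at hp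
    refine ⟨c, hadj, le_antisymm ?_ ?_⟩
    · have := G.dist_le q
      omega
    · have ht : G.dist x y ≤ G.dist x c + G.dist c y := hG.dist_triangle
      have h1 : G.dist x c = 1 := SimpleGraph.dist_eq_one_iff_adj.mpr hadj
      omega

section Fin

variable [Fintype V]

open Finset in
lemma mem_image_dist_of_le (hG : G.Connected) (v : V) :
    ∀ k, k ∈ Finset.image (G.dist v) Finset.univ →
      ∀ j, j ≤ k → j ∈ Finset.image (G.dist v) Finset.univ := by
  classical
  have hdc : ∀ k, k + 1 ∈ Finset.image (G.dist v) Finset.univ →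
      k ∈ Finset.image (G.dist v) Finset.univ := by
    intro k hk
    rw [Finset.mem_image] at hk
    obtain ⟨u, -, hu⟩ := hk
    have hu' : G.dist u v = k + 1 := by rw [SimpleGraph.dist_comm, hu]
    obtain ⟨u', -, hd⟩ := exists_adj_dist_succ hG hu'
    rw [Finset.mem_image]
    exact ⟨u', Finset.mem_univ _, by rw [SimpleGraph.dist_comm]; exact hd⟩
  intro k
  induction k with
  | zero => intro hk j hj; exact Nat.le_zero.mp hj ▸ hk
  | succ k ih =>
    intro hk j hj
    rcases Nat.eq_or_lt_of_le hj with h | h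
    · exact h ▸ hk
    · exact ih (hdc k hk) j (by omega)

lemma dist_lt_card_image (hG : G.Connected) (v x : V) :
    G.dist v x < (Finset.image (G.dist v) Finset.univ).card := by
  classical
  have hx : G.dist v x ∈ Finset.image (G.dist v) Finset.univ :=
    Finset.mem_image_of_mem _ (Finset.mem_univ x)
  have hsub : Finset.range (G.dist v x + 1) ⊆ Finset.image (G.dist v) Finset.univ := by
    intro k hk
    exact mem_image_dist_of_le hG v _ hx k (by simpa [Nat.lt_succ_iff] using hk)
  have := Finset.card_le_card hsub
  rw [Finset.card_range] at this
  omega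

lemma image_dist_eq_range (hG : G.Connected) (v : V) :
    Finset.image (G.dist v) Finset.univ
      = Finset.range (Finset.image (G.dist v) Finset.univ).card := by
  classical
  refine Finset.eq_of_subset_of_card_le (fun x hx => ?_) (by rw [Finset.card_range])
  rw [Finset.mem_image] at hx
  obtain ⟨u, -, hu⟩ := hx
  rw [Finset.mem_range, ← hu]
  exact dist_lt_card_image hG v u

/-- Strict transmission bound for a vertex with non-injective distance function. -/
lemma transmission_core (hG : G.Connected) (v : V)
    (hninj : ¬ Function.Injective (G.dist v)) :
    transmission G v < M (Fintype.card V) := by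
  classical
  set F : Finset ℕ := Finset.image (G.dist v) Finset.univ with hFdef
  set m : ℕ := F.card with hm
  set n : ℕ := Fintype.card V with hn
  have hF : F = Finset.range m := image_dist_eq_range hG v
  have hlt : ∀ x ∈ F, x < m := by
    intro x hx
    rw [hF, Finset.mem_range] at hx
    exact hx
  set c : ℕ → ℕ := fun k => (Finset.univ.filter (fun u => G.dist v u = k)).card with hc
  have hmaps : ∀ x ∈ (Finset.univ : Finset V), G.dist v x ∈ F := by
    intro x _
    exact Finset.mem_image_of_mem _ (Finset.mem_univ x)
  have hc1 : ∀ k ∈ F, 1 ≤ c k := by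
    intro k hk
    rw [hFdef, Finset.mem_image] at hk
    obtain ⟨u, -, hu⟩ := hk
    have hmem : u ∈ Finset.univ.filter (fun u => G.dist v u = k) := by simp [hu]
    show 1 ≤ (Finset.univ.filter (fun u => G.dist v u = k)).card
    exact Finset.card_pos.mpr ⟨u, hmem⟩
  have hcsum : ∑ k ∈ F, c k = n := by
    rw [hn, ← Finset.card_univ, Finset.card_eq_sum_card_fiberwise hmaps]
  have htr : transmission G v = ∑ k ∈ F, k * c k := by
    rw [transmission, ← Finset.sum_fiberwise_of_maps_to hmaps (fun u => G.dist v u)]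
    refine Finset.sum_congr rfl fun k hk => ?_
    have heq : ∀ u ∈ Finset.univ.filter (fun u => G.dist v u = k), G.dist v u = k := by
      intro u hu
      simpa using (Finset.mem_filter.mp hu).2
    rw [Finset.sum_congr rfl heq, Finset.sum_const, smul_eq_mul, mul_comm]
  have hm1 : 1 ≤ m := by
    have hvm : G.dist v v ∈ F := hmaps v (Finset.mem_univ v)
    have := Finset.card_pos.mpr ⟨_, hvm⟩
    omega
  have hmn : m < n := by
    have hle : m ≤ n := by
      rw [hm, hFdef, hn, ← Finset.card_univ]
      exact Finset.card_image_le
    rcases Nat.lt_or_ge m n with h | h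
    · exact h
    · exfalso
      have hmeq : m = n := by omega
      have hio : Set.InjOn (G.dist v) (Finset.univ : Finset V) := by
        rw [← Finset.card_image_iff, ← hFdef, ← hm, hmeq, hn, Finset.card_univ]
      exact hninj fun a b hab =>
        hio (Finset.mem_coe.mpr (Finset.mem_univ a)) (Finset.mem_coe.mpr (Finset.mem_univ b)) hab
  have hbound : transmission G v ≤ M m + (m - 1) * (n - m) := by
    rw [htr]
    have step : ∀ k ∈ F, k * c k ≤ k + (m - 1) * (c k - 1) := by
      intro k hk
      have h1 := hc1 k hk
      have h2 := hlt k hk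
      obtain ⟨d, hd⟩ : ∃ d, c k = d + 1 := ⟨c k - 1, by omega⟩
      rw [hd]
      have hmm : k * (d + 1) = k + k * d := by ring
      rw [hmm, Nat.add_sub_cancel]
      exact Nat.add_le_add_left (Nat.mul_le_mul_right _ (by omega)) k
    calc ∑ k ∈ F, k * c k ≤ ∑ k ∈ F, (k + (m - 1) * (c k - 1)) :=
          Finset.sum_le_sum step
      _ = (∑ k ∈ F, k) + (m - 1) * ∑ k ∈ F, (c k - 1) := by
          rw [Finset.sum_add_distrib, Finset.mul_sum]
      _ = M m + (m - 1) * (n - m) := by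
          congr 1
          · rw [hF]; rfl
          · congr 1
            have hh : ∑ k ∈ F, (c k - 1) + ∑ k ∈ F, 1 = ∑ k ∈ F, c k := by
              rw [← Finset.sum_add_distrib]
              exact Finset.sum_congr rfl fun k hk => by have := hc1 k hk; omega
            rw [hcsum] at hh
            simp only [Finset.sum_const, smul_eq_mul, mul_one, ← hm] at hh
            omega
  have := M_key hm1 hmn
  omega

/-- If the distance function from `v` is injective, a connected graph is a path. -/
noncomputable def isoPathOfInj (hG : G.Connected) (v : V)
    (hinj : Function.Injective (G.dist v)) :
    G ≃g SimpleGraph.pathGraph (Fintype.card V) := by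
  classical
  set n : ℕ := Fintype.card V with hn
  have hcard : (Finset.image (G.dist v) Finset.univ).card = n := by
    rw [Finset.card_image_of_injective _ hinj, Finset.card_univ]
  have hlt : ∀ x : V, G.dist v x < n := by
    intro x
    rw [← hcard]
    exact dist_lt_card_image hG v x
  have hbij : Function.Bijective (fun x : V => (⟨G.dist v x, hlt x⟩ : Fin n)) := by
    rw [Fintype.bijective_iff_injective_and_card]
    constructor
    · intro a b hab
      exact hinj (by simpa [Fin.ext_iff] using hab)
    · simp [hn]
  refine ⟨Equiv.ofBijective _ hbij, ?_⟩
  intro a b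
  simp only [Equiv.ofBijective_apply, SimpleGraph.pathGraph_adj]
  constructor
  · rintro (h | h)
    · have hb : G.dist b v = G.dist v a + 1 := by
        rw [SimpleGraph.dist_comm]
        exact h.symm
      obtain ⟨b', hadj, hd⟩ := exists_adj_dist_succ hG hb
      rw [SimpleGraph.dist_comm] at hd
      have : b' = a := hinj hd
      subst this
      exact hadj.symm
    · have hb : G.dist a v = G.dist v b + 1 := by
        rw [SimpleGraph.dist_comm]
        exact h.symm
      obtain ⟨a', hadj, hd⟩ := exists_adj_dist_succ hG hb
      rw [SimpleGraph.dist_comm] at hd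
      have : a' = b := hinj hd
      subst this
      exact hadj
  · intro hadj
    have hne : G.dist v a ≠ G.dist v b := fun he => hadj.ne (hinj he)
    have h1 : G.dist v a ≤ G.dist v b + 1 := by
      have ht : G.dist v a ≤ G.dist v b + G.dist b a := hG.dist_triangle
      have h2 : G.dist b a = 1 := SimpleGraph.dist_eq_one_iff_adj.mpr hadj.symm
      omega
    have h2 : G.dist v b ≤ G.dist v a + 1 := by
      have ht : G.dist v b ≤ G.dist v a + G.dist a b := hG.dist_triangle
      have h3 : G.dist a b = 1 := SimpleGraph.dist_eq_one_iff_adj.mpr hadj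
      omega
    omega

/-- Non-strict transmission bound. -/
lemma transmission_le_M (hG : G.Connected) (v : V) :
    transmission G v ≤ M (Fintype.card V) := by
  classical
  by_cases hinj : Function.Injective (G.dist v)
  · have hcard : (Finset.image (G.dist v) Finset.univ).card = Fintype.card V := by
      rw [Finset.card_image_of_injective _ hinj, Finset.card_univ]
    have : transmission G v = ∑ k ∈ Finset.image (G.dist v) Finset.univ, k := by
      rw [transmission, Finset.sum_image (fun a _ b _ h => hinj h)]
    rw [this, image_dist_eq_range hG v, hcard]
    exact le_of_eq rfl
  · exact le_of_lt (transmission_core hG v hinj)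

/-- Strict transmission bound for a non-path. -/
lemma transmission_lt_M (hG : G.Connected) (v : V)
    (hnp : ¬ Nonempty (G ≃g SimpleGraph.pathGraph (Fintype.card V))) :
    transmission G v < M (Fintype.card V) := by
  by_cases hinj : Function.Injective (G.dist v)
  · exact absurd ⟨isoPathOfInj hG v hinj⟩ hnp
  · exact transmission_core hG v hinj

end Fin

end Transmission

section PathFacts

lemma pathGraph_connected' (n : ℕ) [Nonempty (Fin n)] :
    (SimpleGraph.pathGraph n).Connected := by
  cases n with
  | zero => exact (Fin.elim0 ‹Nonempty (Fin 0)›.some)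
  | succ m => exact SimpleGraph.pathGraph_connected m

lemma pathGraph_dist_le (n : ℕ) :
    ∀ (d : ℕ) (i j : Fin n), i.val + d = j.val → (SimpleGraph.pathGraph n).dist i j ≤ d := by
  intro d
  induction d with
  | zero =>
    intro i j h
    have : i = j := Fin.ext (by omega)
    subst this
    simp
  | succ d ih =>
    intro i j h
    have hn : i.val + 1 < n := by have := j.isLt; omega
    set i' : Fin n := ⟨i.val + 1, hn⟩ with hi'
    have hadj : (SimpleGraph.pathGraph n).Adj i i' := SimpleGraph.pathGraph_adj.mpr (Or.inl rfl)
    have : Nonempty (Fin n) := ⟨i⟩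
    have hconn := pathGraph_connected' n
    calc (SimpleGraph.pathGraph n).dist i j
        ≤ (SimpleGraph.pathGraph n).dist i i' + (SimpleGraph.pathGraph n).dist i' j :=
          hconn.dist_triangle
      _ ≤ 1 + d := Nat.add_le_add (le_of_eq (SimpleGraph.dist_eq_one_iff_adj.mpr hadj))
          (ih i' j (by show i.val + 1 + d = j.val; omega))
      _ = d + 1 := by omega

lemma natDist_le_walk_length {n : ℕ} {i j : Fin n} (p : (SimpleGraph.pathGraph n).Walk i j) :
    Nat.dist i.val j.val ≤ p.length := by
  induction p with
  | nil => simp [Nat.dist_self]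
  | @cons a c b h q ih =>
    have hd := SimpleGraph.pathGraph_adj.mp h
    have tri := Nat.dist.triangle_inequality a.val c.val b.val
    have h1 : Nat.dist a.val c.val ≤ 1 := by
      simp only [Nat.dist]
      omega
    rw [SimpleGraph.Walk.length_cons]
    omega

lemma pathGraph_dist (n : ℕ) (i j : Fin n) :
    (SimpleGraph.pathGraph n).dist i j = Nat.dist i.val j.val := by
  have : Nonempty (Fin n) := ⟨i⟩
  refine le_antisymm ?_ ?_
  · rcases le_total i.val j.val with h | h
    · have hb := pathGraph_dist_le n (j.val - i.val) i j (by omega)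
      have : Nat.dist i.val j.val = j.val - i.val := by simp [Nat.dist]; omega
      omega
    · have hb := pathGraph_dist_le n (i.val - j.val) j i (by omega)
      have h2 : Nat.dist i.val j.val = i.val - j.val := by simp [Nat.dist]; omega
      rw [SimpleGraph.dist_comm]
      omega
  · obtain ⟨p, hp⟩ := ((pathGraph_connected' n) i j).exists_walk_length_eq_dist
    have := natDist_le_walk_length p
    omega

lemma transmission_pathGraph (ℓ : ℕ) :
    transmission (SimpleGraph.pathGraph (ℓ + 1)) (0 : Fin (ℓ + 1)) = M (ℓ + 1) := by
  rw [transmission]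
  simp_rw [pathGraph_dist]
  have h0 : ((0 : Fin (ℓ + 1))).val = 0 := rfl
  simp_rw [h0]
  rw [Fin.sum_univ_eq_sum_range (fun k => Nat.dist 0 k)]
  simp_rw [Nat.dist_zero_left]
  rfl

/-- `sigmaP n` is the sum of distances over ordered pairs in the path on `n` vertices. -/
def sigmaP : ℕ → ℕ
  | 0 => 0
  | n + 1 => sigmaP n + 2 * M (n + 1)

lemma sum_range_sub (n : ℕ) : ∑ i ∈ Finset.range n, (n - i) = M n + n := by
  induction n with
  | zero => simp [M]
  | succ n ih =>
    rw [Finset.sum_range_succ]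
    have h2 : ∀ i ∈ Finset.range n, (n + 1 - i) = (n - i) + 1 := by
      intro i hi
      rw [Finset.mem_range] at hi
      omega
    rw [Finset.sum_congr rfl h2, Finset.sum_add_distrib, ih, Finset.sum_const,
      Finset.card_range, M_succ]
    simp
    omega

lemma sum_natDist_last (n : ℕ) : ∑ i ∈ Finset.range n, Nat.dist i n = M n + n := by
  have h : ∀ i ∈ Finset.range n, Nat.dist i n = n - i := by
    intro i hi
    rw [Finset.mem_range] at hi
    simp [Nat.dist]
    omega
  rw [Finset.sum_congr rfl h]
  exact sum_range_sub n

lemma sum_sum_natDist (n : ℕ) :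
    ∑ i ∈ Finset.range n, ∑ j ∈ Finset.range n, Nat.dist i j = sigmaP n := by
  induction n with
  | zero => simp [sigmaP]
  | succ n ih =>
    rw [Finset.sum_range_succ]
    simp_rw [Finset.sum_range_succ]
    rw [Finset.sum_add_distrib, ih]
    have h1 : ∑ i ∈ Finset.range n, Nat.dist i n = M n + n := sum_natDist_last n
    have h2 : ∑ j ∈ Finset.range n, Nat.dist n j = M n + n := by
      rw [← sum_natDist_last n]
      exact Finset.sum_congr rfl fun j _ => Nat.dist_comm n j
    rw [h1, h2, Nat.dist_self, sigmaP, M_succ]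
    omega

lemma sumDist_pathGraph (n : ℕ) : sumDist (SimpleGraph.pathGraph n) = sigmaP n := by
  rw [sumDist]
  have hin : ∀ i : Fin n, ∑ j : Fin n, (SimpleGraph.pathGraph n).dist i j
      = ∑ j ∈ Finset.range n, Nat.dist i.val j := by
    intro i
    simp_rw [pathGraph_dist]
    exact Fin.sum_univ_eq_sum_range (fun k => Nat.dist i.val k) n
  simp_rw [hin]
  rw [Fin.sum_univ_eq_sum_range (fun i => ∑ j ∈ Finset.range n, Nat.dist i j) n]
  exact sum_sum_natDist n

end PathFacts

section TreeBound

variable {T : SimpleGraph V}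

/-- Every tree on at least two vertices has a leaf. -/
lemma exists_tree_leaf [Fintype V] (hT : T.IsTree) (h2 : 2 ≤ Fintype.card V) :
    ∃ u w : V, T.Adj u w ∧ ∀ w', T.Adj u w' → w' = w := by
  classical
  have hconn := hT.isConnected
  have hdegpos : ∀ u : V, 0 < T.degree u := by
    intro u
    obtain ⟨y, hy⟩ := Fintype.exists_ne_of_one_lt_card h2 u
    have hd : 0 < T.dist u y := hconn.pos_dist_of_ne (Ne.symm hy)
    obtain ⟨k, hk⟩ : ∃ k, T.dist u y = k + 1 := ⟨T.dist u y - 1, by omega⟩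
    obtain ⟨x', hadj, -⟩ := exists_adj_dist_succ hconn hk
    exact T.degree_pos_iff_exists_adj u |>.mpr ⟨x', hadj⟩
  have hdeg1 : ∃ u : V, T.degree u = 1 := by
    by_contra hno
    push_neg at hno
    have hge : ∀ u : V, 2 ≤ T.degree u := by
      intro u
      have h1 := hdegpos u
      have h2 := hno u
      omega
    have hsum := T.sum_degrees_eq_twice_card_edges
    have hedge := hT.card_edgeFinset
    have : 2 * Fintype.card V ≤ ∑ v : V, T.degree v := by
      calc 2 * Fintype.card V = ∑ _v : V, 2 := by
            rw [Finset.sum_const, Finset.card_univ, smul_eq_mul, mul_comm]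
        _ ≤ ∑ v : V, T.degree v := Finset.sum_le_sum fun v _ => hge v
    omega
  obtain ⟨u, hu⟩ := hdeg1
  rw [← T.card_neighborFinset_eq_degree, Finset.card_eq_one] at hu
  obtain ⟨w, hw⟩ := hu
  have hmem : ∀ w', T.Adj u w' ↔ w' ∈ T.neighborFinset u := by
    intro w'
    rw [SimpleGraph.mem_neighborFinset]
  refine ⟨u, w, ?_, ?_⟩
  · rw [hmem w, hw]
    exact Finset.mem_singleton_self w
  · intro w' hw'
    have := (hmem w').mp hw'
    rw [hw, Finset.mem_singleton] at this
    exact this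

section Delete

variable [Fintype V] {u w : V}

/-- The graph obtained by deleting the vertex `u`. -/
abbrev delV (T : SimpleGraph V) (u : V) : SimpleGraph {y : V // y ≠ u} :=
  T.comap (Function.Embedding.subtype _)

lemma delV_adj {x y : {y : V // y ≠ u}} : (delV T u).Adj x y ↔ T.Adj x.val y.val := Iff.rfl

lemma delV_walk_of_dist (hT : T.Connected) (hleaf : T.Adj u w ∧ ∀ w', T.Adj u w' → w' = w) :
    ∀ (k : ℕ) (x y : V) (hx : x ≠ u) (hy : y ≠ u), T.dist x y = k →
      ∃ p : (delV T u).Walk ⟨x, hx⟩ ⟨y, hy⟩, p.length = k := by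
  intro k
  induction k with
  | zero =>
    intro x y hx hy h
    have : x = y := (hT.dist_eq_zero_iff).mp h
    subst this
    exact ⟨SimpleGraph.Walk.nil, rfl⟩
  | succ k ih =>
    intro x y hx hy h
    obtain ⟨x', hadj, hd⟩ := exists_adj_dist_succ hT h
    have hx' : x' ≠ u := by
      intro he
      subst he
      -- x' = u : derive a contradiction
      have hxw : x = w := hleaf.2 x hadj.symm
      have hk1 : 1 ≤ k := by
        by_contra hk0
        push_neg at hk0
        interval_cases k
        exact hy ((hT.dist_eq_zero_iff).mp hd).symm
      obtain ⟨j, hj⟩ : ∃ j, k = j + 1 := ⟨k - 1, by omega⟩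
      rw [hj] at hd
      obtain ⟨w', hadj', hd'⟩ := exists_adj_dist_succ hT hd
      have hww : w' = w := hleaf.2 w' hadj'
      subst hww
      rw [← hxw] at hd'
      omega
    obtain ⟨p, hp⟩ := ih x' y hx' hy hd
    exact ⟨SimpleGraph.Walk.cons (delV_adj.mpr hadj) p, by
      rw [SimpleGraph.Walk.length_cons, hp]⟩

lemma delV_dist (hT : T.Connected) (hleaf : T.Adj u w ∧ ∀ w', T.Adj u w' → w' = w)
    (x y : {y : V // y ≠ u}) : (delV T u).dist x y = T.dist x.val y.val := by
  obtain ⟨p, hp⟩ := delV_walk_of_dist hT hleaf (T.dist x.val y.val) x.val y.val x.prop y.prop rfl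
  refine le_antisymm (hp ▸ SimpleGraph.dist_le p) ?_
  have hreach : (delV T u).Reachable x y := by
    rw [← Subtype.coe_eta x x.prop, ← Subtype.coe_eta y y.prop]
    exact ⟨p⟩
  obtain ⟨q, hq⟩ := hreach.exists_walk_length_eq_dist
  have := SimpleGraph.dist_le
    (q.map (SimpleGraph.Embedding.comap (Function.Embedding.subtype _) T).toHom)
  rw [SimpleGraph.Walk.length_map, hq] at this
  exact this

lemma delV_connected (hT : T.Connected) (hleaf : T.Adj u w ∧ ∀ w', T.Adj u w' → w' = w) :
    (delV T u).Connected := by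
  rw [SimpleGraph.connected_iff]
  refine ⟨?_, ⟨⟨w, hleaf.1.ne'⟩⟩⟩
  intro x y
  obtain ⟨p, -⟩ := delV_walk_of_dist hT hleaf (T.dist x.val y.val) x.val y.val x.prop y.prop rfl
  rw [← Subtype.coe_eta x x.prop, ← Subtype.coe_eta y y.prop]
  exact ⟨p⟩

lemma delV_isTree (hT : T.IsTree) (hleaf : T.Adj u w ∧ ∀ w', T.Adj u w' → w' = w) :
    (delV T u).IsTree := by
  constructor
  · exact delV_connected hT.isConnected hleaf
  · intro v c hc
    exact hT.IsAcyclic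
      (c.map (SimpleGraph.Embedding.comap (Function.Embedding.subtype _) T).toHom)
      (hc.map (SimpleGraph.Embedding.comap (Function.Embedding.subtype _) T).injective)

end Delete

/-- A tree on `n` vertices has `sumDist` at most that of the path. -/
lemma tree_sumDist_le (n : ℕ) : ∀ {V : Type*} [Fintype V] (T : SimpleGraph V),
    T.IsTree → Fintype.card V = n → sumDist T ≤ sigmaP n := by
  induction n with
  | zero =>
    intro V _ T hT hcard
    have hne := hT.isConnected.nonempty
    rw [Fintype.card_eq_zero_iff] at hcard
    exact (hcard.false hne.some).elim
  | succ n ih =>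
    intro V _ T hT hcard
    classical
    by_cases hn : n = 0
    · subst hn
      have h1 : ∀ x y : V, x = y := fun x y => Fintype.card_le_one_iff.mp (by omega) x y
      have hz : sumDist T = 0 := by
        rw [sumDist]
        refine Finset.sum_eq_zero fun x _ => Finset.sum_eq_zero fun y _ => ?_
        rw [h1 x y, SimpleGraph.dist_self]
      rw [hz]
      exact Nat.zero_le _
    · have h2 : 2 ≤ Fintype.card V := by omega
      obtain ⟨u, w, hadj, huniq⟩ := exists_tree_leaf hT h2
      have hDtree := delV_isTree hT ⟨hadj, huniq⟩
      have hDcard : Fintype.card {y : V // y ≠ u} = n := by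
        rw [Fintype.card_subtype]
        rw [Finset.filter_ne']
        rw [Finset.card_erase_of_mem (Finset.mem_univ u), Finset.card_univ, hcard]
        omega
      have hIH := ih (delV T u) hDtree hDcard
      have hsplit : sumDist T = sumDist (delV T u) + 2 * transmission T u := by
        rw [sumDist, sum_split_ne (fun x => ∑ y : V, T.dist x y) u]
        have h1 : ∀ x : {y : V // y ≠ u}, ∑ y : V, T.dist x.val y
            = T.dist x.val u + ∑ y : {y : V // y ≠ u}, T.dist x.val y.val :=
          fun x => sum_split_ne (fun y => T.dist x.val y) u
        simp_rw [h1]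
        rw [Finset.sum_add_distrib]
        have hs2 : ∑ x : {y : V // y ≠ u}, T.dist x.val u = transmission T u := by
          rw [transmission_eq_sum_subtype]
          exact Finset.sum_congr rfl fun x _ => SimpleGraph.dist_comm
        have hs3 : ∑ x : {y : V // y ≠ u}, ∑ y : {y : V // y ≠ u}, T.dist x.val y.val
            = sumDist (delV T u) := by
          rw [sumDist]
          refine Finset.sum_congr rfl fun x _ => Finset.sum_congr rfl fun y _ => ?_
          exact (delV_dist hT.isConnected ⟨hadj, huniq⟩ x y).symm
        rw [hs2, hs3, ← transmission]
        ring
      have htr : transmission T u ≤ M (n + 1) := by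
        have := transmission_le_M hT.isConnected u
        rwa [hcard] at this
      have hsig : sigmaP (n + 1) = sigmaP n + 2 * M (n + 1) := rfl
      omega

end TreeBound


section MainAux

lemma card_subtype_ne' [Fintype V] [DecidableEq V] (v : V) :
    Fintype.card {x : V // x ≠ v} = Fintype.card V - 1 := by
  rw [Fintype.card_subtype, Finset.filter_ne',
    Finset.card_erase_of_mem (Finset.mem_univ v), Finset.card_univ]

lemma final_arith {S1 S2 A P B t1 tP t2 nW l : ℕ}
    (h1 : S1 + 2 * t1 = A + B + 2 * nW * t1 + 2 * l * t2)
    (h2 : S2 + 2 * tP = P + B + 2 * nW * tP + 2 * l * t2)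
    (hAP : A ≤ P) (ht : t1 + 1 ≤ tP) (hn : 2 ≤ nW) : S1 + 2 ≤ S2 := by
  have e : tP - t1 + t1 = tP := by omega
  have hdistr : 2 * nW * tP = 2 * nW * t1 + 2 * nW * (tP - t1) := by
    nth_rewrite 1 [← e]
    rw [Nat.mul_add]
    omega
  have h7 : 4 * (tP - t1) ≤ 2 * nW * (tP - t1) :=
    Nat.mul_le_mul_right _ (by omega)
  omega

lemma wienerIndex_eq_half_sumDist [Fintype V] (G : SimpleGraph V) :
    wienerIndex G = sumDist G / 2 := rfl

end MainAux


/-- gluing a non-path tree `T₁` of order `ℓ + 1 > 1` at a vertex `v₂` of a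
tree `T₂` yields a smaller Wiener index than gluing a path with `ℓ + 1` vertices (by one
of its endpoints) at `v₂`. -/
theorem wiener_glue_lt_glue_path {W : Type*} [Fintype V] [Fintype W] [DecidableEq V]
    (T₁ : SimpleGraph V) (T₂ : SimpleGraph W) (hT₁ : T₁.IsTree) (hT₂ : T₂.IsTree)
    (ℓ : ℕ) (hℓ : 1 ≤ ℓ) (hcard₁ : Fintype.card V = ℓ + 1)
    (hnotpath : ¬ Nonempty (T₁ ≃g SimpleGraph.pathGraph (ℓ + 1)))
    (hcard₂ : 2 ≤ Fintype.card W) (v₁ : V) (v₂ : W) :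
    wienerIndex (glue T₁ v₁ T₂ v₂) <
      wienerIndex (glue (SimpleGraph.pathGraph (ℓ + 1)) 0 T₂ v₂) := by
  classical
  have hc1 := hT₁.isConnected
  have hc2 := hT₂.isConnected
  have hP : (SimpleGraph.pathGraph (ℓ + 1)).Connected := SimpleGraph.pathGraph_connected ℓ
  have hd1 := sumDist_glue (G := T₁) (H := T₂) (v₁ := v₁) (v₂ := v₂) hc1 hc2
  have hd2 := sumDist_glue (G := SimpleGraph.pathGraph (ℓ + 1)) (H := T₂)
    (v₁ := 0) (v₂ := v₂) hP hc2
  have hcV' : Fintype.card {x : V // x ≠ v₁} = ℓ := by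
    rw [card_subtype_ne', hcard₁]
    omega
  have hcP' : Fintype.card {x : Fin (ℓ + 1) // x ≠ 0} = ℓ := by
    rw [card_subtype_ne', Fintype.card_fin]
    omega
  rw [hcV'] at hd1
  rw [hcP'] at hd2
  have hW1 : sumDist T₁ ≤ sigmaP (ℓ + 1) := tree_sumDist_le (ℓ + 1) T₁ hT₁ hcard₁
  have hP1 : sumDist (SimpleGraph.pathGraph (ℓ + 1)) = sigmaP (ℓ + 1) :=
    sumDist_pathGraph (ℓ + 1)
  have hAP : sumDist T₁ ≤ sumDist (SimpleGraph.pathGraph (ℓ + 1)) := by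
    rw [hP1]
    exact hW1
  have htr1 : transmission T₁ v₁ < M (ℓ + 1) := by
    have := transmission_lt_M hc1 v₁ (by rw [hcard₁]; exact hnotpath)
    rwa [hcard₁] at this
  have htrP : transmission (SimpleGraph.pathGraph (ℓ + 1)) (0 : Fin (ℓ + 1)) = M (ℓ + 1) :=
    transmission_pathGraph ℓ
  have ht : transmission T₁ v₁ + 1 ≤ transmission (SimpleGraph.pathGraph (ℓ + 1)) 0 := by
    omega
  have hkey := final_arith hd1 hd2 hAP ht hcard₂
  rw [wienerIndex_eq_half_sumDist, wienerIndex_eq_half_sumDist]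
  omega
end

section
/- Let T be a tree on at least 2 vertices with a vertex v of degree at least 3, and suppose two distinct pendent paths P and P* are attached to v, of lengths a_1 and a_2 respectively, with a_1 ≥ a_2 ≥ 1. Let T' be the tree obtained from T by removing the leaf endpoint of P* and attaching it as a new leaf to the leaf endpoint of P. Then W(T) < W(T'). -/
set_option maxHeartbeats 1600000


open SimpleGraph

variable {V : Type*}

/-- `p` is a pendent path of length `a` attached to the vertex `v` of `T`:
it starts at `v`, its consecutive vertices are adjacent, its internal vertices have
degree 2 in `T`, and its other endpoint is a leaf of `T`. -/
def IsPendentPath [Fintype V] (T : SimpleGraph V) (v : V) (a : ℕ)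
    (p : Fin (a + 1) → V) : Prop :=
  p 0 = v ∧ Function.Injective p ∧
    (∀ i : Fin a, T.Adj (p i.castSucc) (p i.succ)) ∧
    (∀ i : Fin (a + 1), i ≠ 0 → i ≠ Fin.last a → vertexDegree T (p i) = 2) ∧
    vertexDegree T (p (Fin.last a)) = 1

section AuxiliaryLemmas
set_option linter.unusedSectionVars false
set_option linter.unusedVariables false
variable [DecidableEq V] {G : SimpleGraph V}

/-- Lipschitz potential bound along a walk. -/
lemma lip_walk (f : V → ℕ) (hf : ∀ x y, G.Adj x y → f x ≤ f y + 1)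
    {x y : V} (W : G.Walk x y) : f x ≤ f y + W.length := by
  induction W with
  | nil => simp
  | cons h W ih =>
    have := hf _ _ h
    simp only [SimpleGraph.Walk.length_cons]
    omega

lemma lip_dist (hc : G.Connected) (f : V → ℕ) (hf : ∀ x y, G.Adj x y → f x ≤ f y + 1)
    (x y : V) : f x ≤ f y + G.dist x y := by
  obtain ⟨W, hW⟩ := (hc x y).exists_walk_length_eq_dist
  simpa [hW] using lip_walk f hf W

lemma cut_mem_support {S : Set V} {v₀ : V}
    (hcut : ∀ x ∈ S, ∀ y, G.Adj x y → y ∉ S → y = v₀)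
    {x u : V} (W : G.Walk x u) (hx : x ∈ S) (hu : u ∉ S) : v₀ ∈ W.support := by
  induction W with
  | nil => exact absurd hx hu
  | @cons a b c h W ih =>
    by_cases hb : b ∈ S
    · simp only [SimpleGraph.Walk.support_cons, List.mem_cons]
      exact Or.inr (ih hb hu)
    · have : b = v₀ := hcut a hx b h hb
      subst this
      simp [SimpleGraph.Walk.support_cons, W.start_mem_support]

lemma cut_dist (hc : G.Connected) {S : Set V} {v₀ : V}
    (hcut : ∀ x ∈ S, ∀ y, G.Adj x y → y ∉ S → y = v₀)
    {x u : V} (hx : x ∈ S) (hu : u ∉ S) :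
    G.dist x u = G.dist x v₀ + G.dist v₀ u := by
  refine le_antisymm (hc.dist_triangle) ?_
  obtain ⟨W, hW⟩ := (hc x u).exists_walk_length_eq_dist
  have hm : v₀ ∈ W.support := cut_mem_support hcut W hx hu
  have hsplit := W.take_spec hm
  have hlen : (W.takeUntil v₀ hm).length + (W.dropUntil v₀ hm).length = W.length := by
    rw [← SimpleGraph.Walk.length_append, hsplit]
  have h1 := SimpleGraph.dist_le (W.takeUntil v₀ hm)
  have h2 := SimpleGraph.dist_le (W.dropUntil v₀ hm)
  omega

/-- a path between vertices different from a leaf `w` avoids `w`. -/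
lemma path_avoids_leaf {w n₀ : V} (hw : G.neighborSet w ⊆ {n₀})
    {x y : V} (hx : x ≠ w) (hy : y ≠ w) {P : G.Walk x y} (hP : P.IsPath) :
    w ∉ P.support := by
  intro hmem
  set P₁ := P.takeUntil w hmem with hP₁
  set P₂ := P.dropUntil w hmem with hP₂
  have hsplit := P.take_spec hmem
  have hPP : (P₁.append P₂).IsPath := by rw [hsplit]; exact hP
  obtain ⟨m, h1, Q1, hQ1⟩ := SimpleGraph.Walk.exists_eq_cons_of_ne (Ne.symm hx) P₁.reverse
  obtain ⟨m', h2, Q2, hQ2⟩ := SimpleGraph.Walk.exists_eq_cons_of_ne (Ne.symm hy) P₂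
  have hm1 : m = n₀ := hw h1
  have hm2 : m' = n₀ := hw h2
  have hmem1 : n₀ ∈ P₁.support := by
    have : m ∈ P₁.reverse.support := by rw [hQ1]; simp [Q1.start_mem_support]
    rw [SimpleGraph.Walk.support_reverse] at this
    simpa [hm1] using List.mem_reverse.mp this
  have hmem2 : n₀ ∈ P₂.support.tail := by
    rw [hQ2]; simpa [hm2] using Q2.start_mem_support
  have hnodup := hPP.support_nodup
  rw [SimpleGraph.Walk.support_append] at hnodup
  have hdisj := List.disjoint_of_nodup_append hnodup
  exact hdisj hmem1 hmem2

/-- transfer distances/reachability across two graphs that agree away from a leaf. -/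
lemma leaf_transfer {G H : SimpleGraph V} {w n₀ : V} (hw : G.neighborSet w ⊆ {n₀})
    (hagree : ∀ a b : V, a ≠ w → b ≠ w → G.Adj a b → H.Adj a b)
    {x y : V} (hx : x ≠ w) (hy : y ≠ w) (hr : G.Reachable x y) :
    H.Reachable x y ∧ H.dist x y ≤ G.dist x y := by
  obtain ⟨W, hW⟩ := hr.exists_walk_length_eq_dist
  set P := W.bypass with hPdef
  have hPpath : P.IsPath := W.bypass_isPath
  have hPlen : P.length ≤ G.dist x y := hW ▸ W.length_bypass_le
  have hwP : w ∉ P.support := path_avoids_leaf hw hx hy hPpath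
  have hedges : ∀ e ∈ P.edges, e ∈ H.edgeSet := by
    intro e he
    induction e with
    | h a b =>
      have ha : a ∈ P.support := P.fst_mem_support_of_mem_edges he
      have hb : b ∈ P.support := P.snd_mem_support_of_mem_edges he
      have hGab : G.Adj a b := P.edges_subset_edgeSet he
      exact (hagree a b (fun h => hwP (h ▸ ha)) (fun h => hwP (h ▸ hb)) hGab)
  refine ⟨⟨P.transfer H hedges⟩, ?_⟩
  calc H.dist x y ≤ (P.transfer H hedges).length := SimpleGraph.dist_le _
    _ = P.length := P.length_transfer hedges
    _ ≤ G.dist x y := hPlen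

lemma nbhd_eq_pair [Fintype V] {x a b : V} (h2 : Nat.card (G.neighborSet x) = 2)
    (ha : G.Adj x a) (hb : G.Adj x b) (hab : a ≠ b) : G.neighborSet x = {a, b} := by
  have hsub : ({a, b} : Set V) ⊆ G.neighborSet x := by
    intro z hz; rcases hz with rfl | rfl
    · exact ha
    · exact hb
  refine (Set.eq_of_subset_of_ncard_le hsub ?_ (Set.toFinite _)).symm
  rw [Set.ncard_pair hab, ← Nat.card_coe_set_eq, h2]

lemma nbhd_eq_singleton [Fintype V] {x a : V} (h1 : Nat.card (G.neighborSet x) = 1)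
    (ha : G.Adj x a) : G.neighborSet x = {a} := by
  have hsub : ({a} : Set V) ⊆ G.neighborSet x := by simp [ha]
  refine (Set.eq_of_subset_of_ncard_le hsub ?_ (Set.toFinite _)).symm
  rw [Set.ncard_singleton, ← Nat.card_coe_set_eq, h1]

section Branch

variable {c : ℕ} {r : Fin (c + 1) → V}

noncomputable def branchPot (r : Fin (c + 1) → V) (u : V) : ℕ :=
  ∑ j : Fin (c + 1), if r j = u then (j : ℕ) else 0

lemma branchPot_apply (hinj : Function.Injective r) (i : Fin (c + 1)) :
    branchPot r (r i) = i := by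
  rw [branchPot, Finset.sum_eq_single i]
  · simp
  · intro b _ hb
    have : r b ≠ r i := fun h => hb (hinj h)
    simp [this]
  · simp

lemma branchPot_not_mem {u : V} (hu : ∀ j, r j ≠ u) : branchPot r u = 0 := by
  rw [branchPot]
  exact Finset.sum_eq_zero fun j _ => by simp [hu j]

lemma branch_dist_le (hc : G.Connected)
    (hadj : ∀ k : ℕ, (hk : k < c) → G.Adj (r ⟨k, by omega⟩) (r ⟨k + 1, by omega⟩)) :
    ∀ j i : ℕ, (hij : i ≤ j) → (hj : j ≤ c) →
      G.dist (r ⟨i, by omega⟩) (r ⟨j, by omega⟩) ≤ j - i := by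
  intro j
  induction j with
  | zero => intro i hij hj; interval_cases i; simp
  | succ j ih =>
    intro i hij hj
    rcases Nat.eq_or_lt_of_le hij with rfl | hlt
    · simp
    · have h1 : G.dist (r ⟨i, by omega⟩) (r ⟨j, by omega⟩) ≤ j - i := ih i (by omega) (by omega)
      have h2 : G.dist (r ⟨j, by omega⟩) (r ⟨j + 1, by omega⟩) ≤ 1 := by
        have := SimpleGraph.dist_le (SimpleGraph.Walk.cons (hadj j (by omega))
          (SimpleGraph.Walk.nil))
        simpa using this
      have htri := hc.dist_triangle (u := r ⟨i, by omega⟩) (v := r ⟨j, by omega⟩)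
        (w := r ⟨j + 1, by omega⟩)
      omega

lemma branch_lip (hinj : Function.Injective r) (hcpos : 0 < c)
    (hnbi : ∀ i : ℕ, (h0 : 0 < i) → (hic : i < c) →
      G.neighborSet (r ⟨i, by omega⟩) = {r ⟨i - 1, by omega⟩, r ⟨i + 1, by omega⟩})
    (hnbc : G.neighborSet (r ⟨c, by omega⟩) = {r ⟨c - 1, by omega⟩}) :
    ∀ x y, G.Adj x y → branchPot r x ≤ branchPot r y + 1 := by
  intro x y hxy
  by_cases hx : ∃ i, r i = x
  · obtain ⟨i, rfl⟩ := hx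
    by_cases hi0 : (i : ℕ) = 0
    · have : branchPot r (r i) = 0 := by rw [branchPot_apply hinj, hi0]
      omega
    · have hieta : r i = r ⟨(i : ℕ), i.isLt⟩ := rfl
      by_cases hic : (i : ℕ) < c
      · have hy : y ∈ G.neighborSet (r ⟨(i : ℕ), by omega⟩) := by
          rw [← hieta]; exact hxy
        rw [hnbi (i : ℕ) (by omega) hic] at hy
        have e1 : branchPot r (r i) = (i : ℕ) := branchPot_apply hinj i
        simp only [Set.mem_insert_iff, Set.mem_singleton_iff] at hy
        rcases hy with rfl | rfl
        · have e2 := branchPot_apply hinj ⟨(i : ℕ) - 1, by omega⟩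
          simp only [Fin.val_mk] at e2
          omega
        · have e2 := branchPot_apply hinj ⟨(i : ℕ) + 1, by omega⟩
          simp only [Fin.val_mk] at e2
          omega
      · have hic' : (i : ℕ) = c := by omega
        have hy : y ∈ G.neighborSet (r ⟨c, by omega⟩) := by
          rw [← show r i = r ⟨c, by omega⟩ from congrArg r (Fin.ext hic')]
          exact hxy
        rw [hnbc] at hy
        simp only [Set.mem_singleton_iff] at hy
        subst hy
        have e1 : branchPot r (r i) = (i : ℕ) := branchPot_apply hinj i
        have e2 := branchPot_apply hinj ⟨c - 1, by omega⟩
        simp only [Fin.val_mk] at e2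
        omega
  · have : branchPot r x = 0 := branchPot_not_mem (fun j h => hx ⟨j, h⟩)
    omega

end Branch

section Branch2
variable {c : ℕ} {r : Fin (c + 1) → V}

lemma branch_dist_eq (hc : G.Connected) (hinj : Function.Injective r) (hcpos : 0 < c)
    (hadj : ∀ k : ℕ, (hk : k < c) → G.Adj (r ⟨k, by omega⟩) (r ⟨k + 1, by omega⟩))
    (hnbi : ∀ i : ℕ, (h0 : 0 < i) → (hic : i < c) →
      G.neighborSet (r ⟨i, by omega⟩) = {r ⟨i - 1, by omega⟩, r ⟨i + 1, by omega⟩})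
    (hnbc : G.neighborSet (r ⟨c, by omega⟩) = {r ⟨c - 1, by omega⟩}) :
    ∀ i j : ℕ, (hij : i ≤ j) → (hj : j ≤ c) →
      G.dist (r ⟨i, by omega⟩) (r ⟨j, by omega⟩) = j - i := by
  intro i j hij hj
  refine le_antisymm (branch_dist_le hc hadj j i hij hj) ?_
  have hlip := lip_dist hc (branchPot r) (branch_lip hinj hcpos hnbi hnbc)
    (r ⟨j, by omega⟩) (r ⟨i, by omega⟩)
  rw [branchPot_apply hinj, branchPot_apply hinj] at hlip
  simp only [Fin.val_mk] at hlip
  rw [SimpleGraph.dist_comm] at hlip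
  omega

lemma branch_cut (hc : G.Connected) (hinj : Function.Injective r) (hcpos : 0 < c)
    (hadj : ∀ k : ℕ, (hk : k < c) → G.Adj (r ⟨k, by omega⟩) (r ⟨k + 1, by omega⟩))
    (hnbi : ∀ i : ℕ, (h0 : 0 < i) → (hic : i < c) →
      G.neighborSet (r ⟨i, by omega⟩) = {r ⟨i - 1, by omega⟩, r ⟨i + 1, by omega⟩})
    (hnbc : G.neighborSet (r ⟨c, by omega⟩) = {r ⟨c - 1, by omega⟩}) :
    ∀ u : V, (∀ j : Fin (c + 1), (j : ℕ) ≠ 0 → r j ≠ u) →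
      G.dist (r ⟨c, by omega⟩) u = c + G.dist (r ⟨0, by omega⟩) u := by
  intro u hu
  set S : Set V := {z | ∃ j : Fin (c + 1), (j : ℕ) ≠ 0 ∧ r j = z} with hS
  have hcut : ∀ x ∈ S, ∀ y, G.Adj x y → y ∉ S → y = r ⟨0, by omega⟩ := by
    rintro x ⟨j, hj0, rfl⟩ y hxy hyS
    have hjeta : r j = r ⟨(j : ℕ), j.isLt⟩ := rfl
    by_cases hjc : (j : ℕ) < c
    · have hy : y ∈ G.neighborSet (r ⟨(j : ℕ), by omega⟩) := by rw [← hjeta]; exact hxy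
      rw [hnbi (j : ℕ) (by omega) hjc] at hy
      simp only [Set.mem_insert_iff, Set.mem_singleton_iff] at hy
      rcases hy with rfl | rfl
      · by_cases h1 : (j : ℕ) - 1 = 0
        · exact congrArg r (Fin.ext h1)
        · exact absurd ⟨⟨(j : ℕ) - 1, by omega⟩, h1, rfl⟩ hyS
      · exact absurd ⟨⟨(j : ℕ) + 1, by omega⟩, by simp, rfl⟩ hyS
    · have hjc' : (j : ℕ) = c := by omega
      have hy : y ∈ G.neighborSet (r ⟨c, by omega⟩) := by
        rw [← show r j = r ⟨c, by omega⟩ from congrArg r (Fin.ext hjc')]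
        exact hxy
      rw [hnbc] at hy
      simp only [Set.mem_singleton_iff] at hy
      subst hy
      by_cases h1 : c - 1 = 0
      · exact congrArg r (Fin.ext h1)
      · exact absurd ⟨⟨c - 1, by omega⟩, h1, rfl⟩ hyS
  have hxS : r ⟨c, by omega⟩ ∈ S := ⟨⟨c, by omega⟩, by simp; omega, rfl⟩
  have huS : u ∉ S := by rintro ⟨j, hj0, rfl⟩; exact hu j hj0 rfl
  have hd : G.dist (r ⟨c, by omega⟩) (r ⟨0, by omega⟩) = c := by
    rw [SimpleGraph.dist_comm, branch_dist_eq hc hinj hcpos hadj hnbi hnbc 0 c (by omega) le_rfl]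
    omega
  rw [cut_dist hc hcut hxS huS, hd]

end Branch2

end AuxiliaryLemmas

/-- if two distinct pendent paths of lengths `a₁ ≥ a₂ ≥ 1` are attached to a
vertex `v` of degree at least 3 of a tree `T`, then moving the leaf endpoint of the
shorter pendent path to the leaf endpoint of the longer one strictly increases the
Wiener index. -/
theorem wiener_lt_of_pendent_path_move [Fintype V] [DecidableEq V] (T : SimpleGraph V)
    (hT : T.IsTree) (hcard : 2 ≤ Fintype.card V) (v : V)
    (hdeg : 3 ≤ vertexDegree T v) (a₁ a₂ : ℕ) (ha₂ : 1 ≤ a₂) (ha : a₂ ≤ a₁)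
    (p : Fin (a₁ + 1) → V) (q : Fin (a₂ + 1) → V)
    (hp : IsPendentPath T v a₁ p) (hq : IsPendentPath T v a₂ q)
    (hdisj : ∀ (i : Fin (a₁ + 1)) (j : Fin (a₂ + 1)), p i = q j → i = 0 ∧ j = 0) :
    wienerIndex T <
      wienerIndex (SimpleGraph.fromEdgeSet
        (insert s(q (Fin.last a₂), p (Fin.last a₁))
          (T.edgeSet \ {s(q ⟨a₂ - 1, by omega⟩, q (Fin.last a₂))}))) := by
  classical
  obtain ⟨hp0, hpinj, hpadj, hpdeg, hplast⟩ := hp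
  obtain ⟨hq0, hqinj, hqadj, hqdeg, hqlast⟩ := hq
  have ha₁ : 1 ≤ a₁ := le_trans ha₂ ha
  have hTc : T.Connected := hT.isConnected
  -- abbreviations
  set w : V := q (Fin.last a₂) with hw_def
  set pl : V := p (Fin.last a₁) with hpl_def
  set qq : V := q ⟨a₂ - 1, by omega⟩ with hqq_def
  set G' : SimpleGraph V := SimpleGraph.fromEdgeSet
      (insert s(w, pl) (T.edgeSet \ {s(qq, w)})) with hG'_def
  -- basic adjacencies in T along the two paths
  have hpadj' : ∀ k : ℕ, (hk : k < a₁) → T.Adj (p ⟨k, by omega⟩) (p ⟨k + 1, by omega⟩) :=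
    fun k hk => hpadj ⟨k, hk⟩
  have hqadj' : ∀ k : ℕ, (hk : k < a₂) → T.Adj (q ⟨k, by omega⟩) (q ⟨k + 1, by omega⟩) :=
    fun k hk => hqadj ⟨k, hk⟩
  have hpeq : ∀ (i j : ℕ) (hi : i < a₁ + 1) (hj : j < a₁ + 1), i = j → p ⟨i, hi⟩ = p ⟨j, hj⟩ :=
    fun i j hi hj h => congrArg p (Fin.ext h)
  have hqeq : ∀ (i j : ℕ) (hi : i < a₂ + 1) (hj : j < a₂ + 1), i = j → q ⟨i, hi⟩ = q ⟨j, hj⟩ :=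
    fun i j hi hj h => congrArg q (Fin.ext h)
  -- neighborhoods in T
  have hnbp : ∀ i : ℕ, (h0 : 0 < i) → (hic : i < a₁) →
      T.neighborSet (p ⟨i, by omega⟩) = {p ⟨i - 1, by omega⟩, p ⟨i + 1, by omega⟩} := by
    intro i h0 hic
    refine nbhd_eq_pair (hpdeg ⟨i, by omega⟩ (by simp [Fin.ext_iff]; omega)
      (by simp [Fin.ext_iff, Fin.last]; omega)) ?_ ?_ ?_
    · have := (hpadj' (i - 1) (by omega)).symm
      rwa [hpeq (i - 1 + 1) i (by omega) (by omega) (by omega)] at this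
    · exact hpadj' i hic
    · intro h
      have := hpinj h
      simp only [Fin.mk.injEq] at this
      omega
  have hnbq : ∀ i : ℕ, (h0 : 0 < i) → (hic : i < a₂) →
      T.neighborSet (q ⟨i, by omega⟩) = {q ⟨i - 1, by omega⟩, q ⟨i + 1, by omega⟩} := by
    intro i h0 hic
    refine nbhd_eq_pair (hqdeg ⟨i, by omega⟩ (by simp [Fin.ext_iff]; omega)
      (by simp [Fin.ext_iff, Fin.last]; omega)) ?_ ?_ ?_
    · have := (hqadj' (i - 1) (by omega)).symm
      rwa [hqeq (i - 1 + 1) i (by omega) (by omega) (by omega)] at this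
    · exact hqadj' i hic
    · intro h
      have := hqinj h
      simp only [Fin.mk.injEq] at this
      omega
  have hlastp : p (Fin.last a₁) = p ⟨a₁, by omega⟩ := rfl
  have hlastq : q (Fin.last a₂) = q ⟨a₂, by omega⟩ := rfl
  have hnbpl : T.neighborSet (p ⟨a₁, by omega⟩) = {p ⟨a₁ - 1, by omega⟩} := by
    refine nbhd_eq_singleton (by rw [← hlastp]; exact hplast) ?_
    have := (hpadj' (a₁ - 1) (by omega)).symm
    rwa [hpeq (a₁ - 1 + 1) a₁ (by omega) (by omega) (by omega)] at this
  have hnbw : T.neighborSet w = {qq} := by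
    rw [hw_def, hlastq, hqq_def]
    refine nbhd_eq_singleton (by rw [← hlastq, ← hw_def]; exact hqlast) ?_
    have := (hqadj' (a₂ - 1) (by omega)).symm
    rwa [hqeq (a₂ - 1 + 1) a₂ (by omega) (by omega) (by omega)] at this
  -- distinctness facts
  have hpw : ∀ i : Fin (a₁ + 1), p i ≠ w := by
    intro i h
    obtain ⟨hi0, hj0⟩ := hdisj i (Fin.last a₂) h
    have : a₂ = 0 := by simpa [Fin.ext_iff, Fin.last] using hj0
    omega
  have hplw : pl ≠ w := hpw _
  have hplqq : pl ≠ qq := by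
    intro h
    obtain ⟨hi0, hj0⟩ := hdisj (Fin.last a₁) ⟨a₂ - 1, by omega⟩ h
    have : a₁ = 0 := by simpa [Fin.ext_iff, Fin.last] using hi0
    omega
  have hvw : v ≠ w := by
    intro h
    rw [← hq0] at h
    have := hqinj h
    simp [Fin.ext_iff, Fin.last] at this
    omega
  have hqqw : qq ≠ w := by
    rw [hqq_def, hw_def, hlastq]
    intro h
    have := hqinj h
    simp only [Fin.mk.injEq] at this
    omega
  -- adjacency in G'
  have hG'adj : ∀ x y : V, G'.Adj x y ↔
      x ≠ y ∧ ((x = w ∧ y = pl) ∨ (x = pl ∧ y = w) ∨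
        (T.Adj x y ∧ ¬(x = qq ∧ y = w) ∧ ¬(x = w ∧ y = qq))) := by
    intro x y
    rw [hG'_def]
    simp only [SimpleGraph.fromEdgeSet_adj, Set.mem_insert_iff, Set.mem_diff,
      Set.mem_singleton_iff, Sym2.eq_iff, SimpleGraph.mem_edgeSet]
    constructor
    · rintro ⟨(⟨h1, h2⟩ | ⟨h1, h2⟩) | ⟨hadj, hne⟩, hxy⟩
      · exact ⟨hxy, Or.inl ⟨h1, h2⟩⟩
      · exact ⟨hxy, Or.inr (Or.inl ⟨h1, h2⟩)⟩
      · exact ⟨hxy, Or.inr (Or.inr ⟨hadj, fun h => hne (Or.inl h), fun h => hne (Or.inr h)⟩)⟩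
    · rintro ⟨hxy, (⟨h1, h2⟩ | ⟨h1, h2⟩ | ⟨hadj, h2, h3⟩)⟩
      · exact ⟨Or.inl (Or.inl ⟨h1, h2⟩), hxy⟩
      · exact ⟨Or.inl (Or.inr ⟨h1, h2⟩), hxy⟩
      · exact ⟨Or.inr ⟨hadj, fun h => h.elim h2 h3⟩, hxy⟩
  have hnbw' : G'.neighborSet w = {pl} := by
    ext y
    simp only [SimpleGraph.mem_neighborSet, Set.mem_singleton_iff]
    rw [hG'adj]
    constructor
    · rintro ⟨hne, (⟨-, rfl⟩ | ⟨h1, -⟩ | ⟨hadj, -, h3⟩)⟩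
      · rfl
      · exact absurd h1.symm hplw
      · have : y ∈ T.neighborSet w := hadj
        rw [hnbw] at this
        exact absurd ⟨rfl, this⟩ h3
    · rintro rfl
      exact ⟨Ne.symm hplw, Or.inl ⟨rfl, rfl⟩⟩
  -- branch facts in T
  have hnbq_top : T.neighborSet (q ⟨a₂, by omega⟩) = {q ⟨a₂ - 1, by omega⟩} := by
    rw [← hlastq, ← hw_def]; exact hnbw
  have hdTq : ∀ i j : ℕ, (hij : i ≤ j) → (hj : j ≤ a₂) →
      T.dist (q ⟨i, by omega⟩) (q ⟨j, by omega⟩) = j - i :=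
    branch_dist_eq hTc hqinj (by omega) hqadj' hnbq hnbq_top
  have hdTp : ∀ i j : ℕ, (hij : i ≤ j) → (hj : j ≤ a₁) →
      T.dist (p ⟨i, by omega⟩) (p ⟨j, by omega⟩) = j - i :=
    branch_dist_eq hTc hpinj (by omega) hpadj' hnbp hnbpl
  have hcutT : ∀ u : V, (∀ j : Fin (a₂ + 1), (j : ℕ) ≠ 0 → q j ≠ u) →
      T.dist (q ⟨a₂, by omega⟩) u = a₂ + T.dist (q ⟨0, by omega⟩) u :=
    branch_cut hTc hqinj (by omega) hqadj' hnbq hnbq_top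
  have hq00 : q ⟨0, by omega⟩ = v := hq0
  have hp00 : p ⟨0, by omega⟩ = v := hp0
  -- the long branch in G'
  set r : Fin (a₁ + 1 + 1) → V := fun i => if h : (i : ℕ) < a₁ + 1 then p ⟨i, h⟩ else w
    with hr_def
  have hr_lt : ∀ (i : ℕ) (h : i < a₁ + 1 + 1) (h' : i < a₁ + 1), r ⟨i, h⟩ = p ⟨i, h'⟩ := by
    intro i h h'
    simp only [hr_def, Fin.val_mk]
    rw [dif_pos h']
  have hr_top : r ⟨a₁ + 1, by omega⟩ = w := by
    simp only [hr_def, Fin.val_mk]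
    rw [dif_neg (by omega)]
  have hrinj : Function.Injective r := by
    intro i j h
    simp only [hr_def] at h
    by_cases hi : (i : ℕ) < a₁ + 1 <;> by_cases hj : (j : ℕ) < a₁ + 1
    · rw [dif_pos hi, dif_pos hj] at h
      have := hpinj h
      simp only [Fin.mk.injEq] at this
      exact Fin.ext this
    · rw [dif_pos hi, dif_neg hj] at h
      exact absurd h (hpw _)
    · rw [dif_neg hi, dif_pos hj] at h
      exact absurd h.symm (hpw _)
    · exact Fin.ext (by omega)
  have hradj : ∀ k : ℕ, (hk : k < a₁ + 1) → G'.Adj (r ⟨k, by omega⟩) (r ⟨k + 1, by omega⟩) := by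
    intro k hk
    by_cases hka : k < a₁
    · rw [hr_lt k (by omega) (by omega), hr_lt (k + 1) (by omega) (by omega), hG'adj]
      exact ⟨(hpadj' k hka).ne, Or.inr (Or.inr ⟨hpadj' k hka,
        fun h => hpw _ h.2, fun h => hpw _ h.1⟩)⟩
    · have hk' : k = a₁ := by omega
      subst hk'
      rw [hr_lt k (by omega) (by omega), hr_top, hG'adj]
      exact ⟨hpw _, Or.inr (Or.inl ⟨hlastp.symm, rfl⟩)⟩
  have hrnbi : ∀ i : ℕ, (h0 : 0 < i) → (hic : i < a₁ + 1) →
      G'.neighborSet (r ⟨i, by omega⟩) = {r ⟨i - 1, by omega⟩, r ⟨i + 1, by omega⟩} := by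
    intro i h0 hic
    by_cases hia : i < a₁
    · rw [hr_lt i (by omega) (by omega), hr_lt (i - 1) (by omega) (by omega),
        hr_lt (i + 1) (by omega) (by omega)]
      have hiff : ∀ y, G'.Adj (p ⟨i, by omega⟩) y ↔ T.Adj (p ⟨i, by omega⟩) y := by
        intro y
        rw [hG'adj]
        constructor
        · rintro ⟨hne, (⟨h1, -⟩ | ⟨h1, -⟩ | ⟨h, -⟩)⟩
          · exact absurd h1 (hpw _)
          · have := hpinj (h1.trans hlastp)
            simp only [Fin.mk.injEq, Fin.ext_iff, Fin.val_last] at this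
            omega
          · exact h
        · intro h
          refine ⟨h.ne, Or.inr (Or.inr ⟨h, ?_, fun hh => hpw _ hh.1⟩)⟩
          rintro ⟨h1, -⟩
          obtain ⟨hi0, -⟩ := hdisj ⟨i, by omega⟩ ⟨a₂ - 1, by omega⟩ h1
          simp only [Fin.ext_iff, Fin.val_mk, Fin.val_zero] at hi0
          omega
      ext y
      simp only [SimpleGraph.mem_neighborSet, hiff]
      rw [← SimpleGraph.mem_neighborSet, hnbp i h0 hia]
    · have hia' : i = a₁ := by omega
      have e1 : r ⟨i, by omega⟩ = p ⟨a₁, by omega⟩ := by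
        rw [hr_lt i (by omega) (by omega)]
        exact hpeq i a₁ (by omega) (by omega) hia'
      have e2 : r ⟨i - 1, by omega⟩ = p ⟨a₁ - 1, by omega⟩ := by
        rw [hr_lt (i - 1) (by omega) (by omega)]
        exact hpeq (i - 1) (a₁ - 1) (by omega) (by omega) (by omega)
      have e3 : r ⟨i + 1, by omega⟩ = w := by
        rw [show (⟨i + 1, by omega⟩ : Fin (a₁ + 1 + 1)) = ⟨a₁ + 1, by omega⟩ from
          Fin.ext (by simp; omega)]
        exact hr_top
      rw [e1, e2, e3]
      ext y
      simp only [SimpleGraph.mem_neighborSet, Set.mem_insert_iff, Set.mem_singleton_iff]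
      rw [hG'adj]
      constructor
      · rintro ⟨hne, (⟨h1, -⟩ | ⟨-, h2⟩ | ⟨h, -⟩)⟩
        · rw [← hlastp] at h1
          exact absurd h1 hplw
        · exact Or.inr h2
        · have : y ∈ T.neighborSet (p ⟨a₁, by omega⟩) := h
          rw [hnbpl] at this
          exact Or.inl this
      · rintro (rfl | rfl)
        · have hadj : T.Adj (p ⟨a₁, by omega⟩) (p ⟨a₁ - 1, by omega⟩) := by
            have h2 := hpadj' (a₁ - 1) (by omega)
            rw [hpeq (a₁ - 1 + 1) a₁ (by omega) (by omega) (by omega)] at h2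
            exact h2.symm
          refine ⟨hadj.ne, Or.inr (Or.inr ⟨hadj, ?_, ?_⟩)⟩
          · rintro ⟨h1, -⟩
            rw [← hlastp] at h1
            exact hplqq h1
          · rintro ⟨h1, -⟩
            rw [← hlastp] at h1
            exact hplw h1
        · exact ⟨fun h => hpw _ h, Or.inr (Or.inl ⟨hlastp.symm, rfl⟩)⟩
  have hrnb_top : G'.neighborSet (r ⟨a₁ + 1, by omega⟩) = {r ⟨a₁, by omega⟩} := by
    rw [hr_top, hr_lt a₁ (by omega) (by omega)]
    exact hnbw'
  -- connectivity of G' and distance transfer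
  have hnbwsubT : T.neighborSet w ⊆ {qq} := by rw [hnbw]
  have hagree : ∀ a b : V, a ≠ w → b ≠ w → T.Adj a b → G'.Adj a b := by
    intro a b haw hbw hab
    rw [hG'adj]
    exact ⟨hab.ne, Or.inr (Or.inr ⟨hab, fun h => hbw h.2, fun h => haw h.1⟩)⟩
  have hagree' : ∀ a b : V, a ≠ w → b ≠ w → G'.Adj a b → T.Adj a b := by
    intro a b haw hbw hab
    rw [hG'adj] at hab
    rcases hab with ⟨-, (⟨h1, -⟩ | ⟨-, h2⟩ | ⟨h, -⟩)⟩
    · exact absurd h1 haw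
    · exact absurd h2 hbw
    · exact h
  have hG'conn : G'.Connected := by
    have hconn0 : ∀ x : V, x ≠ w → G'.Reachable x v := fun x hx =>
      (leaf_transfer hnbwsubT hagree hx hvw (hTc x v)).1
    have hkey : ∀ z : V, G'.Reachable z v := by
      intro z
      by_cases hz : z = w
      · subst hz
        have hadj : G'.Adj w pl := by
          rw [hG'adj]
          exact ⟨Ne.symm hplw, Or.inl ⟨rfl, rfl⟩⟩
        exact hadj.reachable.trans (hconn0 pl hplw)
      · exact hconn0 z hz
    rw [SimpleGraph.connected_iff]
    exact ⟨fun x y => (hkey x).trans (hkey y).symm, ⟨v⟩⟩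
  have hnbwsubG' : G'.neighborSet w ⊆ {pl} := by rw [hnbw']
  have hdist_eq : ∀ x y : V, x ≠ w → y ≠ w → G'.dist x y = T.dist x y :=
    fun x y hx hy => le_antisymm
      (leaf_transfer hnbwsubT hagree hx hy (hTc x y)).2
      (leaf_transfer hnbwsubG' hagree' hx hy (hG'conn x y)).2
  -- branch facts in G'
  have hdG' : ∀ i j : ℕ, (hij : i ≤ j) → (hj : j ≤ a₁ + 1) →
      G'.dist (r ⟨i, by omega⟩) (r ⟨j, by omega⟩) = j - i :=
    branch_dist_eq hG'conn hrinj (by omega) hradj hrnbi hrnb_top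
  have hcutG' : ∀ u : V, (∀ j : Fin (a₁ + 1 + 1), (j : ℕ) ≠ 0 → r j ≠ u) →
      G'.dist (r ⟨a₁ + 1, by omega⟩) u = (a₁ + 1) + G'.dist (r ⟨0, by omega⟩) u :=
    branch_cut hG'conn hrinj (by omega) hradj hrnbi hrnb_top
  have hr00 : r ⟨0, by omega⟩ = v := by
    rw [hr_lt 0 (by omega) (by omega)]
    exact hp0
  -- distance values from w in T
  have hdTw_q : ∀ j : Fin (a₂ + 1), T.dist w (q j) = a₂ - (j : ℕ) := by
    intro j
    rw [SimpleGraph.dist_comm]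
    exact hdTq (j : ℕ) a₂ (by omega) le_rfl
  have hdTv_p : ∀ i : Fin (a₁ + 1), T.dist v (p i) = (i : ℕ) := by
    intro i
    have h1 := hdTp 0 (i : ℕ) (by omega) (by omega)
    rw [hp00] at h1
    have h2 : T.dist v (p ⟨(i : ℕ), i.isLt⟩) = T.dist v (p i) := rfl
    omega
  have hdTv_q : ∀ j : Fin (a₂ + 1), T.dist v (q j) = (j : ℕ) := by
    intro j
    have h1 := hdTq 0 (j : ℕ) (by omega) (by omega)
    rw [hq00] at h1
    have h2 : T.dist v (q ⟨(j : ℕ), j.isLt⟩) = T.dist v (q j) := rfl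
    omega
  have hqnotp : ∀ (i : Fin (a₁ + 1)) (j : Fin (a₂ + 1)), (j : ℕ) ≠ 0 → q j ≠ p i := by
    intro i j hj h
    obtain ⟨-, hj0⟩ := hdisj i j h.symm
    rw [hj0] at hj
    exact hj rfl
  have hdTw_p : ∀ i : Fin (a₁ + 1), T.dist w (p i) = a₂ + (i : ℕ) := by
    intro i
    have h1 := hcutT (p i) (fun j hj => hqnotp i j hj)
    rw [hq00] at h1
    rw [hdTv_p i] at h1
    exact h1
  have hdTw_o : ∀ u : V, (∀ j : Fin (a₂ + 1), (j : ℕ) ≠ 0 → q j ≠ u) →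
      T.dist w u = a₂ + T.dist v u := by
    intro u h
    have h1 := hcutT u h
    rw [hq00] at h1
    exact h1
  -- distance values from w in G'
  have hdG'w_p : ∀ i : Fin (a₁ + 1), G'.dist w (p i) = (a₁ + 1) - (i : ℕ) := by
    intro i
    have h1 := hdG' (i : ℕ) (a₁ + 1) (by omega) le_rfl
    rw [hr_top, hr_lt (i : ℕ) (by omega) (by omega)] at h1
    rw [SimpleGraph.dist_comm]
    exact h1
  have hdG'w_u : ∀ u : V, u ≠ w → (∀ i : Fin (a₁ + 1), (i : ℕ) ≠ 0 → p i ≠ u) →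
      G'.dist w u = (a₁ + 1) + T.dist v u := by
    intro u huw hpu
    have h1 : ∀ j : Fin (a₁ + 1 + 1), (j : ℕ) ≠ 0 → r j ≠ u := by
      intro j hj
      by_cases hjlt : (j : ℕ) < a₁ + 1
      · have : r j = p ⟨(j : ℕ), hjlt⟩ := hr_lt (j : ℕ) j.isLt hjlt
        rw [this]
        exact hpu ⟨(j : ℕ), hjlt⟩ hj
      · have hje : j = ⟨a₁ + 1, by omega⟩ := Fin.ext (by simp; omega)
        rw [hje, hr_top]
        exact Ne.symm huw
    have h2 := hcutG' u h1
    rw [hr_top, hr00] at h2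
    rw [h2, hdist_eq v u hvw huw]
  -- partition of the vertex set
  set SP : Finset V := Finset.image p Finset.univ with hSP_def
  set SQ : Finset V := Finset.image q (Finset.univ.erase 0) with hSQ_def
  set SO : Finset V := Finset.univ \ (SP ∪ SQ) with hSO_def
  have hdisjPQ : Disjoint SP SQ := by
    rw [Finset.disjoint_left]
    intro a haP haQ
    obtain ⟨i, -, rfl⟩ := Finset.mem_image.mp haP
    obtain ⟨j, hj, hqj⟩ := Finset.mem_image.mp haQ
    obtain ⟨-, hj0⟩ := hdisj i j hqj.symm
    exact (Finset.mem_erase.mp hj).1 hj0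
  have hsum : ∀ F : V → ℕ, ∑ u : V, F u =
      (∑ i : Fin (a₁ + 1), F (p i)) +
        (∑ j ∈ Finset.univ.erase (0 : Fin (a₂ + 1)), F (q j)) + ∑ u ∈ SO, F u := by
    intro F
    have h1 : ∑ u ∈ SO, F u + ∑ u ∈ SP ∪ SQ, F u = ∑ u : V, F u :=
      Finset.sum_sdiff (Finset.subset_univ _)
    have h2 : ∑ u ∈ SP ∪ SQ, F u = ∑ u ∈ SP, F u + ∑ u ∈ SQ, F u :=
      Finset.sum_union hdisjPQ
    have h3 : ∑ u ∈ SP, F u = ∑ i : Fin (a₁ + 1), F (p i) :=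
      Finset.sum_image (fun x _ y _ h => hpinj h)
    have h4 : ∑ u ∈ SQ, F u = ∑ j ∈ Finset.univ.erase (0 : Fin (a₂ + 1)), F (q j) :=
      Finset.sum_image (fun x _ y _ h => hqinj h)
    omega
  have hmemSO : ∀ u : V, u ∈ SO ↔ (∀ i, p i ≠ u) ∧ (∀ j : Fin (a₂ + 1), (j : ℕ) ≠ 0 → q j ≠ u) := by
    intro u
    rw [hSO_def, Finset.mem_sdiff, Finset.mem_union]
    constructor
    · rintro ⟨-, hn⟩
      constructor
      · intro i h
        exact hn (Or.inl (Finset.mem_image.mpr ⟨i, Finset.mem_univ i, h⟩))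
      · intro j hj h
        refine hn (Or.inr (Finset.mem_image.mpr
          ⟨j, Finset.mem_erase.mpr ⟨?_, Finset.mem_univ j⟩, h⟩))
        exact fun h0 => hj (by rw [h0]; rfl)
    · rintro ⟨h1, h2⟩
      refine ⟨Finset.mem_univ u, ?_⟩
      rintro (hP | hQ)
      · obtain ⟨i, -, h⟩ := Finset.mem_image.mp hP
        exact h1 i h
      · obtain ⟨j, hj, h⟩ := Finset.mem_image.mp hQ
        exact h2 j (fun h0 => (Finset.mem_erase.mp hj).1 (Fin.ext h0)) h
  have hwSQmem : ∀ u ∈ SO, u ≠ w := by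
    intro u hu h
    obtain ⟨-, h2⟩ := (hmemSO u).mp hu
    exact h2 (Fin.last a₂) (by simp [Fin.last]; omega) (by rw [← hw_def, h])
  -- SO is nonempty
  have hSOne : 1 ≤ SO.card := by
    have h3 : 3 ≤ Nat.card (T.neighborSet v) := hdeg
    have hadjp1 : T.Adj v (p ⟨1, by omega⟩) := by
      have := hpadj' 0 (by omega)
      rwa [hp00] at this
    have hadjq1 : T.Adj v (q ⟨1, by omega⟩) := by
      have := hqadj' 0 (by omega)
      rwa [hq00] at this
    obtain ⟨o, ho, ho1, ho2⟩ :
        ∃ o, o ∈ T.neighborSet v ∧ o ≠ p ⟨1, by omega⟩ ∧ o ≠ q ⟨1, by omega⟩ := by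
      by_contra hcon
      push_neg at hcon
      have hsub : T.neighborSet v ⊆ {p ⟨1, by omega⟩, q ⟨1, by omega⟩} := by
        intro z hz
        by_cases h1 : z = p ⟨1, by omega⟩
        · exact Set.mem_insert_iff.mpr (Or.inl h1)
        · exact Set.mem_insert_iff.mpr (Or.inr (hcon z hz h1))
      have hle := Set.ncard_le_ncard hsub (Set.toFinite _)
      have hub : ({p ⟨1, by omega⟩, q ⟨1, by omega⟩} : Set V).ncard ≤ 2 := by
        refine le_trans (Set.ncard_insert_le _ _) ?_
        simp [Set.ncard_singleton]
      rw [← Nat.card_coe_set_eq] at hle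
      omega
    have hoP : ∀ i : Fin (a₁ + 1), p i ≠ o := by
      intro i h
      subst h
      by_cases h0 : (i : ℕ) = 0
      · have : p i = v := by
          rw [show i = 0 from Fin.ext h0]
          exact hp0
        rw [this] at ho
        exact T.irrefl ho
      · by_cases hA : (i : ℕ) = a₁
        · have hv : v ∈ T.neighborSet (p ⟨a₁, by omega⟩) := by
            rw [show (⟨a₁, by omega⟩ : Fin (a₁ + 1)) = i from Fin.ext hA.symm]
            exact ho.symm
          rw [hnbpl] at hv
          have h01 := hpinj (hp0.trans hv)
          simp only [Fin.ext_iff, Fin.val_zero, Fin.val_mk] at h01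
          have : (i : ℕ) = 1 := by omega
          exact ho1 (congrArg p (Fin.ext this))
        · have hv : v ∈ T.neighborSet (p ⟨(i : ℕ), by omega⟩) := ho.symm
          rw [hnbp (i : ℕ) (by omega) (by omega)] at hv
          rcases hv with hv | hv
          · have h01 := hpinj (hp0.trans hv)
            simp only [Fin.ext_iff, Fin.val_zero, Fin.val_mk] at h01
            have : (i : ℕ) = 1 := by omega
            exact ho1 (congrArg p (Fin.ext this))
          · have h01 := hpinj (hp0.trans hv)
            simp only [Fin.ext_iff, Fin.val_zero, Fin.val_mk] at h01
            omega
    have hoQ : ∀ j : Fin (a₂ + 1), (j : ℕ) ≠ 0 → q j ≠ o := by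
      intro j hj h
      subst h
      by_cases hA : (j : ℕ) = a₂
      · have hv : v ∈ T.neighborSet (q ⟨a₂, by omega⟩) := by
          rw [show (⟨a₂, by omega⟩ : Fin (a₂ + 1)) = j from Fin.ext hA.symm]
          exact ho.symm
        rw [hnbq_top] at hv
        have h01 := hqinj (hq0.trans hv)
        simp only [Fin.ext_iff, Fin.val_zero, Fin.val_mk] at h01
        have hj1 : (j : ℕ) = 1 := by omega
        exact ho2 (congrArg q (Fin.ext hj1))
      · have hv : v ∈ T.neighborSet (q ⟨(j : ℕ), by omega⟩) := ho.symm
        rw [hnbq (j : ℕ) (by omega) (by omega)] at hv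
        rcases hv with hv | hv
        · have h01 := hqinj (hq0.trans hv)
          simp only [Fin.ext_iff, Fin.val_zero, Fin.val_mk] at h01
          have : (j : ℕ) = 1 := by omega
          exact ho2 (congrArg q (Fin.ext this))
        · have h01 := hqinj (hq0.trans hv)
          simp only [Fin.ext_iff, Fin.val_zero, Fin.val_mk] at h01
          omega
    have hoSO : o ∈ SO := (hmemSO o).mpr ⟨hoP, hoQ⟩
    exact Finset.card_pos.mpr ⟨o, hoSO⟩
  -- transmission sums
  set RA : ℕ := ∑ i ∈ Finset.range (a₁ + 1), i with hRA_def
  set RB : ℕ := ∑ j ∈ Finset.range a₂, j with hRB_def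
  set k : ℕ := SO.card with hk_def
  set D : ℕ := ∑ u ∈ SO, T.dist v u with hD_def
  have hAT : ∑ i : Fin (a₁ + 1), T.dist w (p i) = (a₁ + 1) * a₂ + RA := by
    rw [Finset.sum_congr rfl (fun i _ => hdTw_p i)]
    rw [Fin.sum_univ_eq_sum_range (fun m => a₂ + m) (a₁ + 1)]
    rw [Finset.sum_add_distrib, Finset.sum_const, Finset.card_range, smul_eq_mul, hRA_def]
  have hAG : ∑ i : Fin (a₁ + 1), G'.dist w (p i) = RA + (a₁ + 1) := by
    rw [Finset.sum_congr rfl (fun i _ => hdG'w_p i)]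
    rw [Fin.sum_univ_eq_sum_range (fun m => a₁ + 1 - m) (a₁ + 1)]
    have hrefl := Finset.sum_range_reflect (fun m => m + 1) (a₁ + 1)
    have he : ∀ m ∈ Finset.range (a₁ + 1), a₁ + 1 - 1 - m + 1 = a₁ + 1 - m := by
      intro m hm
      have := Finset.mem_range.mp hm
      omega
    rw [Finset.sum_congr rfl he] at hrefl
    rw [hrefl, Finset.sum_add_distrib, Finset.sum_const, Finset.card_range, smul_eq_mul,
      hRA_def, mul_one]
  have hBTuniv : ∑ j : Fin (a₂ + 1), T.dist w (q j) = RB + a₂ := by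
    rw [Finset.sum_congr rfl (fun j _ => hdTw_q j)]
    rw [Fin.sum_univ_eq_sum_range (fun m => a₂ - m) (a₂ + 1)]
    have hrefl := Finset.sum_range_reflect (fun m => m) (a₂ + 1)
    have he : ∀ m ∈ Finset.range (a₂ + 1), a₂ + 1 - 1 - m = a₂ - m := by
      intro m hm
      omega
    rw [Finset.sum_congr rfl he] at hrefl
    rw [hrefl, Finset.sum_range_succ, hRB_def]
  have hBT : ∑ j ∈ Finset.univ.erase (0 : Fin (a₂ + 1)), T.dist w (q j) = RB := by
    have h0 : T.dist w (q 0) + ∑ j ∈ Finset.univ.erase (0 : Fin (a₂ + 1)), T.dist w (q j) =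
        ∑ j : Fin (a₂ + 1), T.dist w (q j) :=
      Finset.add_sum_erase Finset.univ (fun j => T.dist w (q j))
        (Finset.mem_univ (0 : Fin (a₂ + 1)))
    have h1 : T.dist w (q 0) = a₂ := by
      have := hdTw_q 0
      simpa using this
    omega
  have hBGpt : ∀ j : Fin (a₂ + 1), G'.dist w (q j) =
      if (j : ℕ) = a₂ then 0 else a₁ + 1 + (j : ℕ) := by
    intro j
    by_cases hj : (j : ℕ) = a₂
    · rw [if_pos hj]
      have hqw : q j = w := by
        rw [hw_def]
        exact congrArg q (Fin.ext (by simpa [Fin.last] using hj))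
      rw [hqw]
      exact SimpleGraph.dist_self
    · rw [if_neg hj]
      have hqjw : q j ≠ w := by
        intro h
        rw [hw_def] at h
        have := hqinj h
        rw [this] at hj
        simp [Fin.last] at hj
      have hpi : ∀ i : Fin (a₁ + 1), (i : ℕ) ≠ 0 → p i ≠ q j := by
        intro i hi h
        obtain ⟨hi0, -⟩ := hdisj i j h
        rw [hi0] at hi
        exact hi rfl
      rw [hdG'w_u (q j) hqjw hpi, hdTv_q j]
  have hBGuniv : ∑ j : Fin (a₂ + 1), G'.dist w (q j) = a₂ * (a₁ + 1) + RB := by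
    rw [Finset.sum_congr rfl (fun j _ => hBGpt j)]
    rw [Fin.sum_univ_eq_sum_range (fun m => if m = a₂ then 0 else a₁ + 1 + m) (a₂ + 1)]
    rw [Finset.sum_range_succ, if_pos rfl]
    have he : ∀ m ∈ Finset.range a₂, (if m = a₂ then 0 else a₁ + 1 + m) = a₁ + 1 + m := by
      intro m hm
      rw [if_neg (by have := Finset.mem_range.mp hm; omega)]
    rw [Finset.sum_congr rfl he, Finset.sum_add_distrib, Finset.sum_const, Finset.card_range,
      smul_eq_mul, hRB_def]
    ring
  have hBG : (a₁ + 1) + ∑ j ∈ Finset.univ.erase (0 : Fin (a₂ + 1)), G'.dist w (q j) =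
      a₂ * (a₁ + 1) + RB := by
    have h0 : G'.dist w (q 0) + ∑ j ∈ Finset.univ.erase (0 : Fin (a₂ + 1)), G'.dist w (q j) =
        ∑ j : Fin (a₂ + 1), G'.dist w (q j) :=
      Finset.add_sum_erase Finset.univ (fun j => G'.dist w (q j))
        (Finset.mem_univ (0 : Fin (a₂ + 1)))
    have h1 : G'.dist w (q 0) = a₁ + 1 := by
      have := hBGpt 0
      simp only [Fin.val_zero] at this
      simpa [show ¬ (0 = a₂) by omega] using this
    omega
  have hCT : ∑ u ∈ SO, T.dist w u = k * a₂ + D := by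
    have he : ∀ u ∈ SO, T.dist w u = a₂ + T.dist v u := by
      intro u hu
      exact hdTw_o u ((hmemSO u).mp hu).2
    rw [Finset.sum_congr rfl he, Finset.sum_add_distrib, Finset.sum_const, smul_eq_mul,
      hk_def, hD_def]
  have hCG : ∑ u ∈ SO, G'.dist w u = k * (a₁ + 1) + D := by
    have he : ∀ u ∈ SO, G'.dist w u = (a₁ + 1) + T.dist v u := by
      intro u hu
      exact hdG'w_u u (hwSQmem u hu) (fun i _ h => ((hmemSO u).mp hu).1 i h)
    rw [Finset.sum_congr rfl he, Finset.sum_add_distrib, Finset.sum_const, smul_eq_mul,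
      hk_def, hD_def]
  -- the transmission identity
  have hmul : k * (a₁ + 1) = k * a₂ + k * (a₁ + 1 - a₂) := by
    rw [← Nat.left_distrib]
    congr 1
    omega
  have hmul2 : (a₁ + 1) * a₂ = a₂ * (a₁ + 1) := Nat.mul_comm _ _
  have hPhiT : ∑ u : V, T.dist w u = ((a₁ + 1) * a₂ + RA) + RB + (k * a₂ + D) := by
    rw [hsum (T.dist w), hAT, hBT, hCT]
  have hPhiG : (∑ u : V, G'.dist w u) + (a₁ + 1) =
      (RA + (a₁ + 1)) + (a₂ * (a₁ + 1) + RB) + (k * (a₁ + 1) + D) := by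
    rw [hsum (G'.dist w), hAG, hCG]
    omega
  have htrans : ∑ u : V, G'.dist w u = (∑ u : V, T.dist w u) + k * (a₁ + 1 - a₂) := by
    omega
  -- double sum decomposition
  set E : Finset V := Finset.univ.erase w with hE_def
  have hdec : ∀ H : SimpleGraph V, ∑ x : V, ∑ y : V, H.dist x y =
      (∑ x ∈ E, ∑ y ∈ E, H.dist x y) + (∑ x ∈ E, H.dist x w) + ∑ y : V, H.dist w y := by
    intro H
    have h1 : (∑ y : V, H.dist w y) + ∑ x ∈ E, ∑ y : V, H.dist x y =
        ∑ x : V, ∑ y : V, H.dist x y :=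
      Finset.add_sum_erase Finset.univ (fun x => ∑ y : V, H.dist x y) (Finset.mem_univ w)
    have h2 : ∀ x : V, H.dist x w + ∑ y ∈ E, H.dist x y = ∑ y : V, H.dist x y := fun x =>
      Finset.add_sum_erase Finset.univ (fun y => H.dist x y) (Finset.mem_univ w)
    have h3 : ∑ x ∈ E, ∑ y : V, H.dist x y =
        ∑ x ∈ E, (H.dist x w + ∑ y ∈ E, H.dist x y) :=
      Finset.sum_congr rfl (fun x _ => (h2 x).symm)
    rw [Finset.sum_add_distrib] at h3
    omega
  have hcol : ∀ H : SimpleGraph V, ∑ x ∈ E, H.dist x w = ∑ y : V, H.dist w y := by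
    intro H
    have h1 : ∑ x ∈ E, H.dist x w = ∑ x ∈ E, H.dist w x :=
      Finset.sum_congr rfl (fun x _ => SimpleGraph.dist_comm)
    have h2 : H.dist w w + ∑ x ∈ E, H.dist w x = ∑ x : V, H.dist w x :=
      Finset.add_sum_erase Finset.univ (fun x => H.dist w x) (Finset.mem_univ w)
    have h3 : H.dist w w = 0 := SimpleGraph.dist_self
    omega
  have hinner : ∑ x ∈ E, ∑ y ∈ E, G'.dist x y = ∑ x ∈ E, ∑ y ∈ E, T.dist x y := by
    refine Finset.sum_congr rfl (fun x hx => Finset.sum_congr rfl (fun y hy => ?_))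
    exact hdist_eq x y (Finset.mem_erase.mp hx).1 (Finset.mem_erase.mp hy).1
  have hK1 : 1 ≤ k * (a₁ + 1 - a₂) := by
    have : 1 ≤ a₁ + 1 - a₂ := by omega
    calc 1 = 1 * 1 := by ring
      _ ≤ k * (a₁ + 1 - a₂) := Nat.mul_le_mul hSOne this
  have hglobal : ∑ x : V, ∑ y : V, G'.dist x y =
      (∑ x : V, ∑ y : V, T.dist x y) + 2 * (k * (a₁ + 1 - a₂)) := by
    have hdT := hdec T
    have hdG := hdec G'
    have hcT := hcol T
    have hcG := hcol G'
    omega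
  have main : wienerIndex T < wienerIndex G' := by
    show (∑ u : V, ∑ x : V, T.dist u x) / 2 < (∑ u : V, ∑ x : V, G'.dist u x) / 2
    omega
  exact main
end

section
/- For any odd integer n ≥ 7, the starlike tree S((n−1)/2, (n−5)/2, 2) is transmission irregular if and only if none of the numbers n − 4, n, 2n − 6 and 2n − 2 is a perfect square. -/
open SimpleGraph

variable {V : Type*}

namespace StarAux

/-! ### Arithmetic model of the starlike tree `S(m, m-2, 2)` on `2m+1` vertices -/

/-- depth of a vertex -/
def dep (m x : ℕ) : ℕ := if x ≤ m then x else if x ≤ 2*m-2 then x - m else x - (2*m-2)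
/-- branch of a vertex -/
def br (m x : ℕ) : ℕ := if x ≤ m then 0 else if x ≤ 2*m-2 then 1 else 2
/-- distance function -/
def D (m x y : ℕ) : ℕ :=
  if br m x = br m y then (dep m x - dep m y) + (dep m y - dep m x)
  else dep m x + dep m y
/-- parent of a vertex -/
def par (m x : ℕ) : ℕ := if dep m x ≤ 1 then 0 else x - 1
/-- transmission offset -/
def g (m x : ℕ) : ℕ :=
  if x ≤ m then 2*x*x
  else if x ≤ 2*m-2 then 2*((x-m)*(x-m+4))
  else if x = 2*m-1 then 2*(2*m-3) else 2*(4*m-4)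
/-- Σ_{j<k} |i-j| -/
def f (i k : ℕ) : ℕ := ∑ j ∈ Finset.range k, ((i - j) + (j - i))

variable {m a b : ℕ}

lemma D_comm (x y : ℕ) : D m x y = D m y x := by
  unfold D; split_ifs <;> omega

lemma D_eq_zero (hm : 3 ≤ m) {x y : ℕ} (h : D m x y = 0) : x = y := by
  unfold D br dep at h
  split_ifs at h <;> first | exact ‹False›.elim | omega

set_option maxHeartbeats 2000000 in
lemma key (hm : 3 ≤ m) {x y : ℕ} (hxy : x ≠ y) (hd : dep m y ≤ dep m x) :
    1 ≤ dep m x ∧ D m (par m x) y + 1 = D m x y := by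
  unfold D par br dep at *
  split_ifs at * <;> first | exact ‹False›.elim | omega

set_option maxHeartbeats 2000000 in
lemma Dstep (hm : 3 ≤ m) {x : ℕ} (h1 : 1 ≤ dep m x) (y : ℕ) :
    D m x y ≤ D m (par m x) y + 1 ∧ D m (par m x) y ≤ D m x y + 1 := by
  unfold D par br dep at *
  split_ifs at * <;> first | exact ‹False›.elim | omega

lemma adj_iff (hb : b + 2 = a) (ha : 3 ≤ a) (x y : Fin (a + b + 2 + 1)) :
    (starlike a b 2).Adj x y ↔
      ((x.val = par a y.val ∧ 1 ≤ dep a y.val) ∨ (y.val = par a x.val ∧ 1 ≤ dep a x.val)) := by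
  have hx := x.isLt
  have hy := y.isLt
  rw [starlike, SimpleGraph.fromRel_adj]
  rw [ne_eq, Fin.ext_iff]
  unfold par dep
  split_ifs <;> omega

lemma exists_walk (hb : b + 2 = a) (ha : 3 ≤ a) (x y : Fin (a + b + 2 + 1)) :
    ∃ w : (starlike a b 2).Walk x y, w.length = D a x.val y.val := by
  set G := starlike a b 2 with hG
  generalize hd : D a x.val y.val = d
  induction d using Nat.strong_induction_on generalizing x y with
  | _ d ih =>
    match d with
    | 0 =>
      have : x = y := Fin.ext (D_eq_zero ha hd)
      subst this
      exact ⟨SimpleGraph.Walk.nil, rfl⟩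
    | d + 1 =>
      have hxy : x ≠ y := by
        intro h; subst h
        simp [D] at hd
      rcases le_total (dep a y.val) (dep a x.val) with hle | hle
      · obtain ⟨h1, h2⟩ := key ha (fun h => hxy (Fin.ext h)) hle
        have hp : par a x.val < a + b + 2 + 1 := by
          unfold par; have := x.isLt; split_ifs <;> omega
        have hadj : G.Adj x ⟨par a x.val, hp⟩ := by
          rw [hG, adj_iff hb ha]; right; exact ⟨rfl, h1⟩
        obtain ⟨w, hw⟩ := ih d (by omega) ⟨par a x.val, hp⟩ y (by simp only [Fin.val_mk]; omega)
        exact ⟨SimpleGraph.Walk.cons hadj w, by simp [hw]⟩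
      · obtain ⟨h1, h2⟩ := key ha (fun h => hxy (Fin.ext h.symm)) hle
        have hp : par a y.val < a + b + 2 + 1 := by
          unfold par; have := y.isLt; split_ifs <;> omega
        have hadj : G.Adj y ⟨par a y.val, hp⟩ := by
          rw [hG, adj_iff hb ha]; right; exact ⟨rfl, h1⟩
        obtain ⟨w, hw⟩ := ih d (by omega) ⟨par a y.val, hp⟩ x
          (by simp only [Fin.val_mk]
              have hc := D_comm (m := a) x.val y.val
              omega)
        refine ⟨(SimpleGraph.Walk.cons hadj w).reverse, ?_⟩
        rw [SimpleGraph.Walk.length_reverse]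
        simp only [SimpleGraph.Walk.length_cons]
        rw [D_comm] at hd; omega

lemma D_le_walk (hb : b + 2 = a) (ha : 3 ≤ a) (x y : Fin (a + b + 2 + 1))
    (w : (starlike a b 2).Walk x y) : D a x.val y.val ≤ w.length := by
  induction w with
  | nil => simp [D]
  | @cons u v t hadj w ih =>
    rw [adj_iff hb ha] at hadj
    have step : D a u.val t.val ≤ D a v.val t.val + 1 := by
      rcases hadj with ⟨h1, h2⟩ | ⟨h1, h2⟩
      · have := (Dstep ha h2 t.val).2
        rw [← h1] at this; omega
      · have := (Dstep ha h2 t.val).1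
        rw [← h1] at this; omega
    simp only [SimpleGraph.Walk.length_cons]
    omega

lemma dist_eq (hb : b + 2 = a) (ha : 3 ≤ a) (x y : Fin (a + b + 2 + 1)) :
    (starlike a b 2).dist x y = D a x.val y.val := by
  obtain ⟨w, hw⟩ := exists_walk hb ha x y
  refine le_antisymm (hw ▸ SimpleGraph.dist_le w) ?_
  have hr : (starlike a b 2).Reachable x y := ⟨w⟩
  obtain ⟨p, hp⟩ := hr.exists_walk_length_eq_dist
  rw [← hp]
  exact D_le_walk hb ha x y p

/-! ### Summation lemmas -/

open Finset

lemma f_ge : ∀ k i, k ≤ i → 2 * f i k + k*k = k*(2*i+1) := by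
  intro k
  induction k with
  | zero => simp [f]
  | succ k ih =>
    intro i hki
    obtain ⟨e, rfl⟩ : ∃ e, i = k + 1 + e := ⟨i - (k+1), by omega⟩
    have h := ih (k+1+e) (by omega)
    unfold f at *
    rw [Finset.sum_range_succ]
    have h1 : k + 1 + e - k = e + 1 := by omega
    have h2 : k - (k + 1 + e) = 0 := by omega
    rw [h1, h2]
    nlinarith [h]

lemma f_lt : ∀ d i, 2 * f i (i + 1 + d) = i*(i+1) + d*(d+1) := by
  intro d
  induction d with
  | zero =>
    intro i
    have h := f_ge i i le_rfl
    unfold f at *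
    rw [Finset.sum_range_succ]
    simp
    nlinarith [h]
  | succ d ih =>
    intro i
    have h := ih i
    unfold f at *
    have hr : i + 1 + (d + 1) = (i + 1 + d) + 1 := by omega
    rw [hr, Finset.sum_range_succ]
    have h1 : i - (i + 1 + d) = 0 := by omega
    have h2 : i + 1 + d - i = d + 1 := by omega
    rw [h1, h2]
    nlinarith [h]

lemma sum_shift (i c k : ℕ) : 2 * (∑ j ∈ range k, (i + c + j)) = 2*(k*(i+c)) + k*(k-1) := by
  rw [Finset.sum_add_distrib, Finset.sum_const, card_range, smul_eq_mul]
  linarith [Finset.sum_range_id_mul_two k]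

lemma sum_split (hm : 3 ≤ m) (h : ℕ → ℕ) :
    ∑ y ∈ range (2*m+1), h y =
      (∑ y ∈ range (m+1), h y) + (∑ j ∈ range (m-2), h (m+1+j)) + h (2*m-1) + h (2*m) := by
  rw [show 2*m+1 = ((m+1)+(m-2))+1+1 by omega, Finset.sum_range_succ, Finset.sum_range_succ,
    Finset.sum_range_add]
  rw [show (m+1)+(m-2)+1 = 2*m by omega, show (m+1)+(m-2) = 2*m-1 by omega]

set_option maxHeartbeats 1000000 in
lemma two_S (hm : 3 ≤ m) (x : ℕ) (hx : x ≤ 2*m) :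
    2 * (∑ y ∈ range (2*m+1), D m x y) = m*(m+1) + (m-2)*(m-1) + 6 + g m x := by
  rw [sum_split hm]
  rcases Nat.lt_or_ge m x with hbr | hbr
  · rcases Nat.lt_or_ge (2*m-2) x with hbr2 | hbr2
    · -- branch 2 : x = 2m-1 or 2m
      have hA : ∑ y ∈ range (m+1), D m x y = ∑ y ∈ range (m+1), (x - (2*m-2) + 0 + y) :=
        Finset.sum_congr rfl (fun y hy => by
          have := Finset.mem_range.mp hy; unfold D br dep
          split_ifs <;> first | exact ‹False›.elim | omega)
      have hB : ∑ j ∈ range (m-2), D m x (m+1+j) =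
          ∑ j ∈ range (m-2), (x - (2*m-2) + 1 + j) :=
        Finset.sum_congr rfl (fun j hj => by
          have := Finset.mem_range.mp hj; unfold D br dep
          split_ifs <;> first | exact ‹False›.elim | omega)
      have hsA := sum_shift (x - (2*m-2)) 0 (m+1)
      have hsB := sum_shift (x - (2*m-2)) 1 (m-2)
      rw [hA, hB]
      rcases (by omega : x = 2*m-1 ∨ x = 2*m) with rfl | rfl
      · have hC : D m (2*m-1) (2*m-1) = 0 := by
          unfold D br dep; split_ifs <;> first | exact ‹False›.elim | omega
        have hD : D m (2*m-1) (2*m) = 1 := by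
          unfold D br dep; split_ifs <;> first | exact ‹False›.elim | omega
        have hg : g m (2*m-1) = 2*(2*m-3) := by
          unfold g; split_ifs <;> first | exact ‹False›.elim | omega
        rw [hC, hD, hg]
        rw [show 2*m-1 - (2*m-2) = 1 by omega] at hsA hsB ⊢
        zify [hm, show (2:ℕ) ≤ m by omega, show (1:ℕ) ≤ m by omega,
          show (3:ℕ) ≤ 2*m by omega,
          show (1:ℕ) ≤ m + 1 by omega, show (1:ℕ) ≤ m - 2 by omega] at hsA hsB ⊢
        ring_nf at hsA hsB ⊢
        linarith [hsA, hsB]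
      · have hC : D m (2*m) (2*m-1) = 1 := by
          unfold D br dep; split_ifs <;> first | exact ‹False›.elim | omega
        have hD : D m (2*m) (2*m) = 0 := by
          unfold D br dep; split_ifs <;> first | exact ‹False›.elim | omega
        have hg : g m (2*m) = 2*(4*m-4) := by
          unfold g; split_ifs <;> first | exact ‹False›.elim | omega
        rw [hC, hD, hg]
        rw [show 2*m - (2*m-2) = 2 by omega] at hsA hsB ⊢
        zify [hm, show (2:ℕ) ≤ m by omega, show (1:ℕ) ≤ m by omega,
          show (4:ℕ) ≤ 4*m by omega,
          show (1:ℕ) ≤ m + 1 by omega, show (1:ℕ) ≤ m - 2 by omega] at hsA hsB ⊢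
        ring_nf at hsA hsB ⊢
        linarith [hsA, hsB]
    · -- branch 1 : m < x ≤ 2m-2
      have hA : ∑ y ∈ range (m+1), D m x y = ∑ y ∈ range (m+1), (x - m + 0 + y) :=
        Finset.sum_congr rfl (fun y hy => by
          have := Finset.mem_range.mp hy; unfold D br dep
          split_ifs <;> first | exact ‹False›.elim | omega)
      have hB : ∑ j ∈ range (m-2), D m x (m+1+j) =
          ∑ j ∈ range (m-2), ((x - m - 1 - j) + (j - (x - m - 1))) :=
        Finset.sum_congr rfl (fun j hj => by
          have := Finset.mem_range.mp hj; unfold D br dep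
          split_ifs <;> first | exact ‹False›.elim | omega)
      have hC : D m x (2*m-1) = x - m + 1 := by
        unfold D br dep; split_ifs <;> first | exact ‹False›.elim | omega
      have hD : D m x (2*m) = x - m + 2 := by
        unfold D br dep; split_ifs <;> first | exact ‹False›.elim | omega
      have hg : g m x = 2*((x-m)*(x-m+4)) := by
        unfold g; split_ifs <;> first | exact ‹False›.elim | omega
      rw [hA, hB, hC, hD, hg]
      have hsA := sum_shift (x - m) 0 (m+1)
      have hfB := f_lt (2*m-2-x) (x - m - 1)
      have e2 : x - m - 1 + 1 + (2*m-2-x) = m - 2 := by omega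
      rw [e2] at hfB
      unfold f at hfB
      set SA := ∑ y ∈ range (m+1), (x - m + 0 + y) with hSA
      set SB := ∑ j ∈ range (m-2), ((x - m - 1 - j) + (j - (x - m - 1))) with hSB
      zify [hm, hbr2, show (2:ℕ) ≤ m by omega, show (1:ℕ) ≤ m by omega,
        show m ≤ x by omega, show m + 1 ≤ x by omega, show (1:ℕ) ≤ x - m by omega,
        show (2:ℕ) ≤ 2*m by omega, show x ≤ 2*m - 2 by omega,
        show (1:ℕ) ≤ m + 1 by omega, show (1:ℕ) ≤ m - 2 by omega] at hsA hfB ⊢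
      ring_nf at hsA hfB ⊢
      linarith [hsA, hfB]
  · -- branch 0 : x ≤ m
    have hA : ∑ y ∈ range (m+1), D m x y = ∑ y ∈ range (m+1), ((x - y) + (y - x)) :=
      Finset.sum_congr rfl (fun y hy => by
        have := Finset.mem_range.mp hy; unfold D br dep
        split_ifs <;> first | exact ‹False›.elim | omega)
    have hB : ∑ j ∈ range (m-2), D m x (m+1+j) = ∑ j ∈ range (m-2), (x + 1 + j) :=
      Finset.sum_congr rfl (fun j hj => by
        have := Finset.mem_range.mp hj; unfold D br dep
        split_ifs <;> first | exact ‹False›.elim | omega)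
    have hC : D m x (2*m-1) = x + 1 := by
      unfold D br dep; split_ifs <;> first | exact ‹False›.elim | omega
    have hD : D m x (2*m) = x + 2 := by
      unfold D br dep; split_ifs <;> first | exact ‹False›.elim | omega
    have hg : g m x = 2*x*x := by
      unfold g; split_ifs <;> first | exact ‹False›.elim | omega
    rw [hA, hB, hC, hD, hg]
    have hsB := sum_shift x 1 (m-2)
    have hfA := f_lt (m - x) x
    have e1 : x + 1 + (m - x) = m + 1 := by omega
    rw [e1] at hfA
    unfold f at hfA
    set SA := ∑ y ∈ range (m+1), ((x - y) + (y - x)) with hSA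
    set SB := ∑ j ∈ range (m-2), (x + 1 + j) with hSB
    zify [hm, hbr, show (2:ℕ) ≤ m by omega, show (1:ℕ) ≤ m by omega,
      show x ≤ m by omega, show (1:ℕ) ≤ m + 1 by omega,
      show (1:ℕ) ≤ m - 2 by omega] at hsB hfA ⊢
    ring_nf at hsB hfA ⊢
    linarith [hsB, hfA]

/-! ### Number theory -/

lemma pronic_inj : ∀ p q : ℕ, p*(p+4) = q*(q+4) → p = q := by
  intro p q h
  rcases lt_trichotomy p q with h' | h' | h'
  · nlinarith
  · exact h'
  · nlinarith

lemma sq_ne_pronic : ∀ x p : ℕ, 1 ≤ p → x*x = p*(p+4) → False := by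
  intro x p hp h
  rcases le_or_gt x (p+1) with h' | h'
  · nlinarith
  · nlinarith

lemma g_inj (hm : 3 ≤ m)
    (h1 : ∀ t, 2*m-3 ≠ t*t) (h2 : ∀ t, 2*m+1 ≠ t*t)
    (h3 : ∀ t, 4*m-4 ≠ t*t) (h4 : ∀ t, 4*m ≠ t*t) :
    ∀ x y, x ≤ 2*m → y ≤ 2*m → g m x = g m y → x = y := by
  obtain ⟨k, rfl⟩ : ∃ k, m = k + 3 := ⟨m - 3, by omega⟩
  have h1' : ∀ t, 2*k+3 ≠ t*t := by
    intro t; have h := h1 t; revert h; generalize t*t = s; omega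
  have h2' : ∀ t, 2*k+7 ≠ t*t := by
    intro t; have h := h2 t; revert h; generalize t*t = s; omega
  have h3' : ∀ t, 4*k+8 ≠ t*t := by
    intro t; have h := h3 t; revert h; generalize t*t = s; omega
  have h4' : ∀ t, 4*k+12 ≠ t*t := by
    intro t; have h := h4 t; revert h; generalize t*t = s; omega
  intro x y hx hy h
  have casex : x ≤ k+3 ∨ (∃ p, x = k+4+p ∧ p ≤ k) ∨ x = 2*k+5 ∨ x = 2*k+6 := by
    rcases Nat.lt_or_ge x (k+4) with h' | h'
    · exact Or.inl (by omega)
    · rcases Nat.lt_or_ge x (2*k+5) with h'' | h''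
      · exact Or.inr (Or.inl ⟨x - (k+4), by omega⟩)
      · exact Or.inr (Or.inr (by omega))
  have casey : y ≤ k+3 ∨ (∃ q, y = k+4+q ∧ q ≤ k) ∨ y = 2*k+5 ∨ y = 2*k+6 := by
    rcases Nat.lt_or_ge y (k+4) with h' | h'
    · exact Or.inl (by omega)
    · rcases Nat.lt_or_ge y (2*k+5) with h'' | h''
      · exact Or.inr (Or.inl ⟨y - (k+4), by omega⟩)
      · exact Or.inr (Or.inr (by omega))
  have gv0 : ∀ z, z ≤ k+3 → g (k+3) z = 2*(z*z) := by
    intro z hz; unfold g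
    split_ifs <;> first | exact ‹False›.elim | ring | omega
  have gv1 : ∀ p, p ≤ k → g (k+3) (k+4+p) = 2*((p+1)*(p+1+4)) := by
    intro p hp; unfold g
    have e : k+4+p - (k+3) = p + 1 := by omega
    split_ifs <;> first | exact ‹False›.elim | (rw [e]) | omega
  have gv2 : g (k+3) (2*k+5) = 2*(2*k+3) := by
    unfold g; split_ifs <;> first | exact ‹False›.elim | omega
  have gv3 : g (k+3) (2*k+6) = 2*(4*k+8) := by
    unfold g; split_ifs <;> first | exact ‹False›.elim | omega
  rcases casex with hcx | ⟨p, rfl, hp⟩ | rfl | rfl <;>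
    rcases casey with hcy | ⟨q, rfl, hq⟩ | rfl | rfl
  · rw [gv0 x hcx, gv0 y hcy] at h
    exact Nat.mul_self_inj.mp (by omega)
  · rw [gv0 x hcx, gv1 q hq] at h
    exact absurd (by linarith : x*x = (q+1)*((q+1)+4)) (fun hh => sq_ne_pronic x (q+1) (by omega) hh)
  · rw [gv0 x hcx, gv2] at h
    exact absurd (by linarith : 2*k+3 = x*x) (h1' x)
  · rw [gv0 x hcx, gv3] at h
    exact absurd (by linarith : 4*k+8 = x*x) (h3' x)
  · rw [gv1 p hp, gv0 y hcy] at h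
    exact absurd (by linarith : y*y = (p+1)*((p+1)+4)) (fun hh => sq_ne_pronic y (p+1) (by omega) hh)
  · rw [gv1 p hp, gv1 q hq] at h
    have := pronic_inj (p+1) (q+1) (by linarith)
    omega
  · rw [gv1 p hp, gv2] at h
    exact absurd (by nlinarith : 2*k+7 = (p+3)*(p+3)) (h2' (p+3))
  · rw [gv1 p hp, gv3] at h
    exact absurd (by nlinarith : 4*k+12 = (p+3)*(p+3)) (h4' (p+3))
  · rw [gv2, gv0 y hcy] at h
    exact absurd (by linarith : 2*k+3 = y*y) (h1' y)
  · rw [gv2, gv1 q hq] at h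
    exact absurd (by nlinarith : 2*k+7 = (q+3)*(q+3)) (h2' (q+3))
  · rfl
  · omega
  · rw [gv3, gv0 y hcy] at h
    exact absurd (by linarith : 4*k+8 = y*y) (h3' y)
  · rw [gv3, gv1 q hq] at h
    exact absurd (by nlinarith : 4*k+12 = (q+3)*(q+3)) (h4' (q+3))
  · omega
  · rfl

lemma gval0 (hm : 3 ≤ m) {z : ℕ} (hz : z ≤ m) : g m z = 2*(z*z) := by
  unfold g; split_ifs <;> first | exact ‹False›.elim | ring | omega

lemma gval1 (hm : 3 ≤ m) {p : ℕ} (hp : p + 1 ≤ m - 2) :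
    g m (m+1+p) = 2*((p+1)*(p+1+4)) := by
  unfold g
  have e : m+1+p - m = p + 1 := by omega
  split_ifs <;> first | exact ‹False›.elim | rw [e] | omega

lemma gval2 (hm : 3 ≤ m) : g m (2*m-1) = 2*(2*m-3) := by
  unfold g; split_ifs <;> first | exact ‹False›.elim | omega

lemma gval3 (hm : 3 ≤ m) : g m (2*m) = 2*(4*m-4) := by
  unfold g; split_ifs <;> first | exact ‹False›.elim | omega

lemma g_not_inj (hm : 3 ≤ m)
    (hsq : (∃ t, 2*m-3 = t*t) ∨ (∃ t, 2*m+1 = t*t) ∨ (∃ t, 4*m-4 = t*t) ∨ (∃ t, 4*m = t*t)) :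
    ∃ x y, x ≤ 2*m ∧ y ≤ 2*m ∧ x ≠ y ∧ g m x = g m y := by
  obtain ⟨k, rfl⟩ : ∃ k, m = k + 3 := ⟨m - 3, by omega⟩
  rcases hsq with ⟨t, h⟩ | ⟨t, h⟩ | ⟨t, h⟩ | ⟨t, h⟩
  · have h' : 2*k+3 = t*t := by revert h; generalize t*t = s; omega
    have ht : t ≤ k+3 := by by_contra hc; push_neg at hc; nlinarith
    refine ⟨t, 2*(k+3)-1, by omega, by omega, by omega, ?_⟩
    rw [gval0 hm ht, gval2 hm, show 2*(k+3)-3 = 2*k+3 by omega]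
    linarith
  · have h' : 2*k+7 = t*t := by revert h; generalize t*t = s; omega
    have ht3 : 3 ≤ t := by by_contra hc; push_neg at hc; interval_cases t <;> omega
    have ht : t ≤ k+3 := by by_contra hc; push_neg at hc; nlinarith
    obtain ⟨p, rfl⟩ : ∃ p, t = p + 3 := ⟨t - 3, by omega⟩
    refine ⟨(k+3)+1+p, 2*(k+3)-1, by omega, by omega, by omega, ?_⟩
    rw [gval1 hm (by omega), gval2 hm, show 2*(k+3)-3 = 2*k+3 by omega]
    nlinarith
  · have h' : 4*k+8 = t*t := by revert h; generalize t*t = s; omega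
    have ht : t ≤ k+3 := by by_contra hc; push_neg at hc; nlinarith
    refine ⟨t, 2*(k+3), by omega, by omega, by omega, ?_⟩
    rw [gval0 hm ht, gval3 hm, show 4*(k+3)-4 = 4*k+8 by omega]
    linarith
  · have h' : 4*k+12 = t*t := by revert h; generalize t*t = s; omega
    have ht3 : 3 ≤ t := by by_contra hc; push_neg at hc; interval_cases t <;> omega
    have ht : t ≤ k+3 := by by_contra hc; push_neg at hc; nlinarith
    obtain ⟨p, rfl⟩ : ∃ p, t = p + 3 := ⟨t - 3, by omega⟩
    refine ⟨(k+3)+1+p, 2*(k+3), by omega, by omega, by omega, ?_⟩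
    rw [gval1 hm (by omega), gval3 hm, show 4*(k+3)-4 = 4*k+8 by omega]
    nlinarith

/-! ### Transmissions and the main equivalence -/

lemma two_transmission (hb : b + 2 = a) (ha : 3 ≤ a) (v : Fin (a+b+2+1)) :
    2 * transmission (starlike a b 2) v = a*(a+1) + (a-2)*(a-1) + 6 + g a v.val := by
  have h1 : transmission (starlike a b 2) v = ∑ y ∈ range (2*a+1), D a v.val y := by
    rw [transmission]
    calc ∑ u : Fin (a+b+2+1), (starlike a b 2).dist v u
        = ∑ u : Fin (a+b+2+1), D a v.val u.val :=
          Finset.sum_congr rfl (fun u _ => dist_eq hb ha v u)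
      _ = ∑ y ∈ range (a+b+2+1), D a v.val y := Fin.sum_univ_eq_sum_range _ _
      _ = ∑ y ∈ range (2*a+1), D a v.val y := by
          apply Finset.sum_congr _ (fun _ _ => rfl)
          rw [show a+b+2+1 = 2*a+1 by omega]
  rw [h1, two_S ha v.val (by have := v.isLt; omega)]

lemma main (hb : b + 2 = a) (ha : 3 ≤ a) :
    TransIrregular (starlike a b 2) ↔
      ((∀ t, 2*a-3 ≠ t*t) ∧ (∀ t, 2*a+1 ≠ t*t) ∧ (∀ t, 4*a-4 ≠ t*t) ∧ (∀ t, 4*a ≠ t*t)) := by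
  constructor
  · rintro ⟨hcard, hinj⟩
    have collide : ∀ x y : ℕ, x ≤ 2*a → y ≤ 2*a → x ≠ y → g a x = g a y → False := by
      intro x y hx hy hxy hgeq
      have hxf : x < a+b+2+1 := by omega
      have hyf : y < a+b+2+1 := by omega
      have e1 := two_transmission hb ha ⟨x, hxf⟩
      have e2 := two_transmission hb ha ⟨y, hyf⟩
      simp only [Fin.val_mk] at e1 e2
      have heq : transmission (starlike a b 2) ⟨x,hxf⟩ = transmission (starlike a b 2) ⟨y,hyf⟩ := by
        omega
      have := hinj heq
      exact hxy (by simpa using congrArg Fin.val this)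
    refine ⟨?_, ?_, ?_, ?_⟩ <;> intro t ht
    · obtain ⟨x,y,hx,hy,hxy,hg⟩ := g_not_inj ha (Or.inl ⟨t, ht⟩)
      exact collide x y hx hy hxy hg
    · obtain ⟨x,y,hx,hy,hxy,hg⟩ := g_not_inj ha (Or.inr (Or.inl ⟨t, ht⟩))
      exact collide x y hx hy hxy hg
    · obtain ⟨x,y,hx,hy,hxy,hg⟩ := g_not_inj ha (Or.inr (Or.inr (Or.inl ⟨t, ht⟩)))
      exact collide x y hx hy hxy hg
    · obtain ⟨x,y,hx,hy,hxy,hg⟩ := g_not_inj ha (Or.inr (Or.inr (Or.inr ⟨t, ht⟩)))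
      exact collide x y hx hy hxy hg
  · rintro ⟨h1, h2, h3, h4⟩
    constructor
    · simp only [Fintype.card_fin]; omega
    · intro u v huv
      have e1 := two_transmission hb ha u
      have e2 := two_transmission hb ha v
      rw [huv] at e1
      have hg : g a u.val = g a v.val := by omega
      exact Fin.ext (g_inj ha h1 h2 h3 h4 u.val v.val
        (by have := u.isLt; omega) (by have := v.isLt; omega) hg)

end StarAux

/-- for any odd `n ≥ 7`, the starlike tree `S((n-1)/2, (n-5)/2, 2)` is
transmission irregular iff none of `n - 4`, `n`, `2n - 6`, `2n - 2` is a perfect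
square. -/
theorem starlike_TI_iff_odd (n : ℕ) (hodd : Odd n) (hn : 7 ≤ n) :
    TransIrregular (starlike ((n - 1) / 2) ((n - 5) / 2) 2) ↔
      (¬ IsPerfectSquare (n - 4) ∧ ¬ IsPerfectSquare n ∧
        ¬ IsPerfectSquare (2 * n - 6) ∧ ¬ IsPerfectSquare (2 * n - 2)) := by
  obtain ⟨m, hm⟩ := hodd
  have hb : (n-5)/2 + 2 = (n-1)/2 := by omega
  have ha3 : 3 ≤ (n-1)/2 := by omega
  rw [StarAux.main hb ha3]
  rw [show 2*((n-1)/2)-3 = n-4 by omega, show 2*((n-1)/2)+1 = n by omega,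
    show 4*((n-1)/2)-4 = 2*n-6 by omega, show 4*((n-1)/2) = 2*n-2 by omega]
  simp only [IsPerfectSquare, not_exists, ne_eq]
end

section
/- For any odd integer n ≥ 11 such that n − 2 is a perfect square, the ordinary caterpillar C_{n−2}((n−1)/2, (n−3)/2 + √(n−2)) is transmission irregular. -/
open SimpleGraph

variable {V : Type*}

namespace CatAux

open Finset

def pii (m p q x : ℕ) : ℕ := if x = m then p else if x = m + 1 then q else x

def ex (m x : ℕ) : ℕ := if x = m ∨ x = m + 1 then 1 else 0

def dfun (m p q x y : ℕ) : ℕ :=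
  if x = y then 0 else Nat.dist (pii m p q x) (pii m p q y) + ex m x + ex m y

lemma dfun_self (m p q x : ℕ) : dfun m p q x x = 0 := by simp [dfun]

lemma dfun_comm (m p q x y : ℕ) : dfun m p q x y = dfun m p q y x := by
  unfold dfun pii ex Nat.dist
  split_ifs <;> omega

set_option maxHeartbeats 1000000 in
lemma step' (m p q a b c : ℕ) (hpq : p < q) (hqm : q < m)
    (h : (c = b + 1 ∧ c < m) ∨ (b = p ∧ c = m) ∨ (b = q ∧ c = m + 1) ∨
         (b = c + 1 ∧ b < m) ∨ (c = p ∧ b = m) ∨ (c = q ∧ b = m + 1)) :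
    dfun m p q a c ≤ dfun m p q a b + 1 := by
  unfold dfun pii ex Nat.dist
  split_ifs <;> omega

lemma step (m p q : ℕ) (hpq : p < q) (hqm : q < m) {u v : Fin (m + 2)}
    (huv : (caterpillar2 m (p + 1) (q + 1)).Adj u v) (x : Fin (m + 2)) :
    dfun m p q x.val v.val ≤ dfun m p q x.val u.val + 1 := by
  unfold caterpillar2 at huv
  rw [SimpleGraph.fromRel_adj] at huv
  obtain ⟨hne, h⟩ := huv
  simp only [Nat.add_sub_cancel] at h
  refine step' m p q x.val u.val v.val hpq hqm ?_
  tauto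

lemma dfun_le_walk (m p q : ℕ) (hpq : p < q) (hqm : q < m) (x : Fin (m + 2)) :
    ∀ {u v : Fin (m + 2)} (w : (caterpillar2 m (p + 1) (q + 1)).Walk u v),
      dfun m p q x.val v.val ≤ dfun m p q x.val u.val + w.length := by
  intro u v w
  induction w with
  | nil => simp
  | cons h w ih =>
    have hs := step m p q hpq hqm h x
    rw [SimpleGraph.Walk.length_cons]
    omega

lemma adj_path (m p q i : ℕ) (h : i + 1 < m) (h1 : i < m + 2) (h2 : i + 1 < m + 2) :
    (caterpillar2 m (p + 1) (q + 1)).Adj ⟨i, h1⟩ ⟨i + 1, h2⟩ := by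
  unfold caterpillar2
  rw [SimpleGraph.fromRel_adj]
  exact ⟨by simp [Fin.ext_iff], Or.inl (Or.inl ⟨rfl, h⟩)⟩

lemma adj_p (m p q : ℕ) (hpm : p < m) (h1 : p < m + 2) (h2 : m < m + 2) :
    (caterpillar2 m (p + 1) (q + 1)).Adj ⟨p, h1⟩ ⟨m, h2⟩ := by
  unfold caterpillar2
  rw [SimpleGraph.fromRel_adj]
  exact ⟨by simp [Fin.ext_iff]; omega, Or.inl (Or.inr (Or.inl ⟨by show p = p + 1 - 1; omega, rfl⟩))⟩

lemma adj_q (m p q : ℕ) (hqm : q < m) (h1 : q < m + 2) (h2 : m + 1 < m + 2) :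
    (caterpillar2 m (p + 1) (q + 1)).Adj ⟨q, h1⟩ ⟨m + 1, h2⟩ := by
  unfold caterpillar2
  rw [SimpleGraph.fromRel_adj]
  exact ⟨by simp [Fin.ext_iff]; omega, Or.inl (Or.inr (Or.inr ⟨by show q = q + 1 - 1; omega, rfl⟩))⟩

lemma walk_path (m p q : ℕ) :
    ∀ j i : ℕ, i ≤ j → j < m → ∀ (hi : i < m + 2) (hj : j < m + 2),
    ∃ w : (caterpillar2 m (p + 1) (q + 1)).Walk ⟨i, hi⟩ ⟨j, hj⟩, w.length = j - i := by
  intro j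
  induction j with
  | zero =>
    intro i hij _ hi hj
    obtain rfl : i = 0 := Nat.le_zero.mp hij
    exact ⟨SimpleGraph.Walk.nil, rfl⟩
  | succ j ih =>
    intro i hij hjm hi hj
    rcases Nat.eq_or_lt_of_le hij with rfl | hlt
    · exact ⟨SimpleGraph.Walk.nil, by simp⟩
    · obtain ⟨w, hw⟩ := ih i (by omega) (by omega) hi (by omega)
      have hadj := adj_path m p q j (by omega) (by omega) hj
      exact ⟨w.concat hadj, by rw [SimpleGraph.Walk.length_concat, hw]; omega⟩

lemma walk_pp (m p q : ℕ) (i j : ℕ) (him : i < m) (hjm : j < m)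
    (hi : i < m + 2) (hj : j < m + 2) :
    ∃ w : (caterpillar2 m (p + 1) (q + 1)).Walk ⟨i, hi⟩ ⟨j, hj⟩, w.length = Nat.dist i j := by
  rcases le_total i j with h | h
  · obtain ⟨w, hw⟩ := walk_path m p q j i h hjm hi hj
    exact ⟨w, by rw [hw]; unfold Nat.dist; omega⟩
  · obtain ⟨w, hw⟩ := walk_path m p q i j h him hj hi
    exact ⟨w.reverse, by rw [SimpleGraph.Walk.length_reverse, hw]; unfold Nat.dist; omega⟩

lemma exists_walk_le (m p q : ℕ) (hpq : p < q) (hqm : q < m) (xv yv : ℕ)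
    (hx : xv < m + 2) (hy : yv < m + 2) :
    ∃ w : (caterpillar2 m (p + 1) (q + 1)).Walk ⟨xv, hx⟩ ⟨yv, hy⟩,
      w.length = dfun m p q xv yv := by
  have hpm : p < m := lt_trans hpq hqm
  have hcx : xv < m ∨ m = xv ∨ m + 1 = xv := by omega
  have hcy : yv < m ∨ m = yv ∨ m + 1 = yv := by omega
  rcases hcx with hxm | rfl | rfl
  · rcases hcy with hym | rfl | rfl
    · obtain ⟨w, hw⟩ := walk_pp m p q xv yv hxm hym hx hy
      refine ⟨w, ?_⟩
      rw [hw]; unfold dfun pii ex Nat.dist; split_ifs <;> omega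
    · obtain ⟨w, hw⟩ := walk_pp m p q xv p hxm hpm hx (by omega)
      refine ⟨w.concat (adj_p m p q hpm (by omega) hy), ?_⟩
      rw [SimpleGraph.Walk.length_concat, hw]
      unfold dfun pii ex Nat.dist; split_ifs <;> omega
    · obtain ⟨w, hw⟩ := walk_pp m p q xv q hxm hqm hx (by omega)
      refine ⟨w.concat (adj_q m p q hqm (by omega) hy), ?_⟩
      rw [SimpleGraph.Walk.length_concat, hw]
      unfold dfun pii ex Nat.dist; split_ifs <;> omega
  · rcases hcy with hym | rfl | rfl
    · obtain ⟨w, hw⟩ := walk_pp m p q p yv hpm hym (by omega) hy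
      refine ⟨SimpleGraph.Walk.cons (adj_p m p q hpm (by omega) hx).symm w, ?_⟩
      rw [SimpleGraph.Walk.length_cons, hw]
      unfold dfun pii ex Nat.dist; split_ifs <;> omega
    · exact ⟨SimpleGraph.Walk.nil, by rw [dfun_self]; rfl⟩
    · obtain ⟨w, hw⟩ := walk_pp m p q p q hpm hqm (by omega) (by omega)
      refine ⟨SimpleGraph.Walk.cons (adj_p m p q hpm (by omega) hx).symm
        (w.concat (adj_q m p q hqm (by omega) hy)), ?_⟩
      rw [SimpleGraph.Walk.length_cons, SimpleGraph.Walk.length_concat, hw]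
      unfold dfun pii ex Nat.dist; split_ifs <;> omega
  · rcases hcy with hym | rfl | rfl
    · obtain ⟨w, hw⟩ := walk_pp m p q q yv hqm hym (by omega) hy
      refine ⟨SimpleGraph.Walk.cons (adj_q m p q hqm (by omega) hx).symm w, ?_⟩
      rw [SimpleGraph.Walk.length_cons, hw]
      unfold dfun pii ex Nat.dist; split_ifs <;> omega
    · obtain ⟨w, hw⟩ := walk_pp m p q q p hqm hpm (by omega) (by omega)
      refine ⟨SimpleGraph.Walk.cons (adj_q m p q hqm (by omega) hx).symm
        (w.concat (adj_p m p q hpm (by omega) hy)), ?_⟩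
      rw [SimpleGraph.Walk.length_cons, SimpleGraph.Walk.length_concat, hw]
      unfold dfun pii ex Nat.dist; split_ifs <;> omega
    · exact ⟨SimpleGraph.Walk.nil, by rw [dfun_self]; rfl⟩

lemma dist_eq (m p q : ℕ) (hpq : p < q) (hqm : q < m) (x y : Fin (m + 2)) :
    (caterpillar2 m (p + 1) (q + 1)).dist x y = dfun m p q x.val y.val := by
  obtain ⟨w, hw⟩ := exists_walk_le m p q hpq hqm x.val y.val x.isLt y.isLt
  refine le_antisymm (hw ▸ SimpleGraph.dist_le w) ?_
  obtain ⟨w', hw'⟩ := (w.reachable).exists_walk_length_eq_dist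
  have h2 := dfun_le_walk m p q hpq hqm x w'
  rw [dfun_self] at h2
  exact le_trans (by simpa using h2 : dfun m p q x.val y.val ≤ w'.length) (le_of_eq hw')



lemma natdist_cast (a b : ℕ) : ((Nat.dist a b : ℕ) : ℤ) = |(a : ℤ) - (b : ℤ)| := by
  rcases le_total a b with h | h
  · rw [abs_of_nonpos (by omega)]; unfold Nat.dist; omega
  · rw [abs_of_nonneg (by omega)]; unfold Nat.dist; omega

lemma sum_natdist (mm c : ℕ) (hc : c < mm) :
    2 * ∑ j ∈ range mm, ((Nat.dist c j : ℕ) : ℤ)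
      = 2 * (c : ℤ) ^ 2 - 2 * ((mm : ℤ) - 1) * (c : ℤ) + (mm : ℤ) ^ 2 - (mm : ℤ) := by
  induction mm with
  | zero => exact absurd hc (by omega)
  | succ mm ih =>
    rcases Nat.lt_or_ge c mm with h | h
    · rw [Finset.sum_range_succ]
      have hd : ((Nat.dist c mm : ℕ) : ℤ) = (mm : ℤ) - (c : ℤ) := by unfold Nat.dist; omega
      rw [hd]
      push_cast
      linear_combination ih h
    · have hcm : c = mm := by omega
      subst hcm
      have hrefl : ∑ j ∈ range (c + 1), ((Nat.dist c j : ℕ) : ℤ)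
          = ∑ j ∈ range (c + 1), (j : ℤ) := by
        rw [← Finset.sum_range_reflect (fun j => ((Nat.dist c j : ℕ) : ℤ)) (c + 1)]
        refine Finset.sum_congr rfl fun j hj => ?_
        rw [Finset.mem_range] at hj
        have hdd : Nat.dist c (c + 1 - 1 - j) = j := by unfold Nat.dist; omega
        rw [hdd]
      rw [hrefl]
      have h0 : (∑ i ∈ range (c + 1), i) * 2 = (c + 1) * c := by
        simpa using Finset.sum_range_id_mul_two (c + 1)
      have h2 := congrArg (Nat.cast (R := ℤ)) h0
      push_cast at h2
      push_cast
      linear_combination h2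

def F0 (m c : ℕ) : ℤ :=
  2 * (c : ℤ) ^ 2 - 2 * ((m : ℤ) - 1) * (c : ℤ) + (m : ℤ) ^ 2 - (m : ℤ) + 4

def F (m p q x : ℕ) : ℤ :=
  if x = m then F0 m p + 2 * ((q : ℤ) - (p : ℤ)) + 2 * (m : ℤ)
  else if x = m + 1 then F0 m q + 2 * ((q : ℤ) - (p : ℤ)) + 2 * (m : ℤ)
  else F0 m x + 2 * |(x : ℤ) - (p : ℤ)| + 2 * |(x : ℤ) - (q : ℤ)|

lemma two_tr (m p q : ℕ) (hpq : p < q) (hqm : q < m) (x : Fin (m + 2)) :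
    2 * ((transmission (caterpillar2 m (p + 1) (q + 1)) x : ℕ) : ℤ) = F m p q x.val := by
  have hpm : p < m := lt_trans hpq hqm
  have hsum : transmission (caterpillar2 m (p + 1) (q + 1)) x
      = ∑ j ∈ range (m + 2), dfun m p q x.val j := by
    unfold transmission
    calc ∑ u : Fin (m + 2), (caterpillar2 m (p + 1) (q + 1)).dist x u
        = ∑ u : Fin (m + 2), dfun m p q x.val u.val :=
          Finset.sum_congr rfl fun u _ => dist_eq m p q hpq hqm x u
      _ = ∑ j ∈ range (m + 2), dfun m p q x.val j :=
          Fin.sum_univ_eq_sum_range _ (m + 2)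
  rw [hsum, Finset.sum_range_succ, Finset.sum_range_succ]
  have hx2 := x.isLt
  have hcx : x.val < m ∨ m = x.val ∨ m + 1 = x.val := by omega
  rcases hcx with hxm | hxm | hxm
  · have e1 : dfun m p q x.val m = Nat.dist x.val p + 1 := by
      unfold dfun pii ex Nat.dist; split_ifs <;> omega
    have e2 : dfun m p q x.val (m + 1) = Nat.dist x.val q + 1 := by
      unfold dfun pii ex Nat.dist; split_ifs <;> omega
    have e3 : ∑ j ∈ range m, dfun m p q x.val j = ∑ j ∈ range m, Nat.dist x.val j := by
      refine Finset.sum_congr rfl fun j hj => ?_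
      rw [Finset.mem_range] at hj
      unfold dfun pii ex Nat.dist; split_ifs <;> omega
    rw [e1, e2, e3]
    have S := sum_natdist m x.val hxm
    have hFa : x.val ≠ m := by omega
    have hFb : x.val ≠ m + 1 := by omega
    unfold F
    rw [if_neg hFa, if_neg hFb]
    unfold F0
    rw [← natdist_cast x.val p, ← natdist_cast x.val q]
    push_cast
    linear_combination S
  · have e1 : dfun m p q x.val m = 0 := by
      unfold dfun pii ex Nat.dist; split_ifs <;> omega
    have e2 : dfun m p q x.val (m + 1) = Nat.dist p q + 2 := by
      unfold dfun pii ex Nat.dist; split_ifs <;> omega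
    have e3 : ∑ j ∈ range m, dfun m p q x.val j = (∑ j ∈ range m, Nat.dist p j) + m := by
      calc ∑ j ∈ range m, dfun m p q x.val j
          = ∑ j ∈ range m, (Nat.dist p j + 1) := by
            refine Finset.sum_congr rfl fun j hj => ?_
            rw [Finset.mem_range] at hj
            unfold dfun pii ex Nat.dist; split_ifs <;> omega
        _ = (∑ j ∈ range m, Nat.dist p j) + ∑ j ∈ range m, 1 := Finset.sum_add_distrib
        _ = (∑ j ∈ range m, Nat.dist p j) + m := by simp
    rw [e1, e2, e3, ← hxm]
    unfold F
    rw [if_pos rfl]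
    unfold F0
    have S := sum_natdist m p hpm
    have hd : ((Nat.dist p q : ℕ) : ℤ) = (q : ℤ) - (p : ℤ) := by unfold Nat.dist; omega
    push_cast
    rw [hd]
    linear_combination S
  · have e1 : dfun m p q x.val m = Nat.dist p q + 2 := by
      unfold dfun pii ex Nat.dist; split_ifs <;> omega
    have e2 : dfun m p q x.val (m + 1) = 0 := by
      unfold dfun pii ex Nat.dist; split_ifs <;> omega
    have e3 : ∑ j ∈ range m, dfun m p q x.val j = (∑ j ∈ range m, Nat.dist q j) + m := by
      calc ∑ j ∈ range m, dfun m p q x.val j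
          = ∑ j ∈ range m, (Nat.dist q j + 1) := by
            refine Finset.sum_congr rfl fun j hj => ?_
            rw [Finset.mem_range] at hj
            unfold dfun pii ex Nat.dist; split_ifs <;> omega
        _ = (∑ j ∈ range m, Nat.dist q j) + ∑ j ∈ range m, 1 := Finset.sum_add_distrib
        _ = (∑ j ∈ range m, Nat.dist q j) + m := by simp
    rw [e1, e2, e3, ← hxm]
    unfold F
    rw [if_neg (by omega), if_pos rfl]
    unfold F0
    have S := sum_natdist m q hqm
    have hd : ((Nat.dist p q : ℕ) : ℤ) = (q : ℤ) - (p : ℤ) := by unfold Nat.dist; omega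
    push_cast
    rw [hd]
    linear_combination S



lemma sq_mod4 (z : ℤ) : z ^ 2 % 4 = 0 ∨ z ^ 2 % 4 = 1 := by
  rcases Int.even_or_odd z with ⟨a, rfl⟩ | ⟨a, rfl⟩
  · left
    have hz : (a + a) ^ 2 = 4 * a ^ 2 := by ring
    rw [hz]
    exact Int.mul_emod_right 4 _
  · right
    have hz : (2 * a + 1) ^ 2 = 1 + 4 * (a ^ 2 + a) := by ring
    rw [hz, Int.add_mul_emod_self_left]
    rfl

lemma sq_sub_self_even (z : ℤ) : (z ^ 2 - z) % 2 = 0 := by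
  have h := Int.even_mul_succ_self (z - 1)
  have hz : (z - 1) * (z - 1 + 1) = z ^ 2 - z := by ring
  rw [hz] at h
  exact Int.even_iff.mp h

lemma sq_ne_two_sq (a b : ℤ) (hb : b ≠ 0) : a ^ 2 ≠ 2 * b ^ 2 := by
  intro h
  have hb' : ((b : ℝ)) ≠ 0 := Int.cast_ne_zero.mpr hb
  have h2 : ((a : ℝ) / (b : ℝ)) ^ 2 = 2 := by
    rw [div_pow, div_eq_iff (by positivity)]
    exact_mod_cast h
  have h3 : Real.sqrt 2 = |(a : ℝ) / (b : ℝ)| := by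
    rw [← h2, Real.sqrt_sq_eq_abs]
  have h4 : ((((|a| : ℤ) : ℚ) / ((|b| : ℤ) : ℚ) : ℚ) : ℝ) = |(a : ℝ) / (b : ℝ)| := by
    push_cast
    rw [abs_div]
  have h5 : Irrational ((((|a| : ℤ) : ℚ) / ((|b| : ℤ) : ℚ) : ℚ) : ℝ) := by
    rw [h4, ← h3]
    exact irrational_sqrt_two
  exact Rat.not_irrational _ h5

lemma core1 (r s s' : ℤ) (hr : 2 ≤ r)
    (h : 2 * s ^ 2 + 2 * |s| + 2 * |s - r| = 2 * s' ^ 2 + 2 * |s'| + 2 * |s' - r|) :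
    s = s' := by
  wlog hle : s' ≤ s generalizing s s' with H
  · exact (H s' s h.symm (by omega)).symm
  by_contra hne
  have hlt : s' < s := lt_of_le_of_ne hle fun e => hne e.symm
  rcases abs_cases s with ⟨e1, f1⟩ | ⟨e1, f1⟩ <;>
    rcases abs_cases (s - r) with ⟨e2, f2⟩ | ⟨e2, f2⟩ <;>
    rcases abs_cases s' with ⟨e3, f3⟩ | ⟨e3, f3⟩ <;>
    rcases abs_cases (s' - r) with ⟨e4, f4⟩ | ⟨e4, f4⟩ <;>
    rw [e1, e2, e3, e4] at h
  -- b1 : 0≤s, r≤s, 0≤s', r≤s'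
  · nlinarith [h, mul_pos (sub_pos.mpr hlt) (show (0:ℤ) < s + s' + 2 by omega)]
  -- b2 : 0≤s, r≤s, 0≤s', s'<r
  · nlinarith [h, mul_self_le_mul_self f3 (show s' ≤ r - 1 by omega),
      mul_self_le_mul_self (show (0:ℤ) ≤ r by omega) (show r ≤ s by omega)]
  -- b3 : 0≤s, r≤s, s'<0, r≤s'
  · omega
  -- b4 : 0≤s, r≤s, s'<0, s'<r : parity case
  · have key : 2 * ((s + s') * (s - s' + 2)) = 4 * r := by linear_combination h
    have key2 : (s + s') * (s - s' + 2) = 2 * r := by linarith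
    rcases lt_trichotomy (s + s') 1 with hA | hA | hA
    · nlinarith [key2, show (0:ℤ) < s - s' + 2 by omega, show s + s' ≤ 0 by omega]
    · rw [hA, one_mul] at key2
      omega
    · have h1 : (2:ℤ) ≤ s + s' := by omega
      have h2 : r + 3 ≤ s - s' + 2 := by omega
      have h5 := mul_le_mul h1 h2 (by omega) (by omega)
      linarith [key2, h5]
  -- b5 : 0≤s, s<r, 0≤s', r≤s'
  · omega
  -- b6 : 0≤s, s<r, 0≤s', s'<r
  · nlinarith [h, mul_pos (sub_pos.mpr hlt) (show (0:ℤ) < s + s' by omega)]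
  -- b7 : 0≤s, s<r, s'<0, r≤s'
  · omega
  -- b8 : 0≤s, s<r, s'<0, s'<r
  · rcases le_or_gt s (-s') with hc | hc
    · nlinarith [h, mul_self_le_mul_self f1 hc]
    · have hd : -s' + 1 ≤ s := by omega
      nlinarith [h, mul_self_le_mul_self (show (0:ℤ) ≤ -s' + 1 by omega) hd]
  -- b9..b15 impossible sign patterns
  · omega
  · omega
  · omega
  · omega
  · omega
  · omega
  · omega
  -- b16 : s<0, s<r, s'<0, s'<r
  · nlinarith [h, mul_pos (sub_pos.mpr hlt) (show (0:ℤ) < 2 - s - s' by omega)]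

lemma core2 (t s : ℤ) (ht : 3 ≤ t)
    (h : 2 * s ^ 2 + 2 * |s| + 2 * |s - (t - 1)| = 2 * (t - 1) + 2 * (t * t)) : False := by
  rcases abs_cases s with ⟨e1, f1⟩ | ⟨e1, f1⟩ <;>
    rcases abs_cases (s - (t - 1)) with ⟨e2, f2⟩ | ⟨e2, f2⟩ <;>
    rw [e1, e2] at h
  · -- s ≥ t-1 : (s+1)^2 = (t+1)^2 - 2
    rcases le_or_gt (s + 1) t with hc | hc
    · nlinarith [h, mul_self_le_mul_self (show (0:ℤ) ≤ s + 1 by omega) hc]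
    · nlinarith [h, mul_self_le_mul_self (show (0:ℤ) ≤ t + 1 by omega) (show t + 1 ≤ s + 1 by omega)]
  · -- 0 ≤ s < t-1 : s² = t²
    nlinarith [h, mul_self_le_mul_self f1 (show s ≤ t - 2 by omega)]
  · omega
  · -- s < 0 : (s-1)^2 = t^2 + 1
    rcases le_or_gt (1 - s) t with hc | hc
    · nlinarith [h, mul_self_le_mul_self (show (0:ℤ) ≤ 1 - s by omega) hc]
    · nlinarith [h, mul_self_le_mul_self (show (0:ℤ) ≤ t + 1 by omega) (show t + 1 ≤ 1 - s by omega)]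

lemma core3 (t s : ℤ) (ht : 3 ≤ t)
    (h : 2 * s ^ 2 + 2 * |s| + 2 * |s - (t - 1)|
        = 2 * (t - 1) * (t - 1) + 2 * (t - 1) + 2 * (t * t)) : False := by
  rcases abs_cases s with ⟨e1, f1⟩ | ⟨e1, f1⟩ <;>
    rcases abs_cases (s - (t - 1)) with ⟨e2, f2⟩ | ⟨e2, f2⟩ <;>
    rw [e1, e2] at h
  · -- s ≥ t-1 : (s+1)^2 = 2t^2
    have h2 : 2 * ((s + 1) ^ 2) = 2 * (2 * t ^ 2) := by linear_combination h
    have h3 : (s + 1) ^ 2 = 2 * t ^ 2 := by linarith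
    exact sq_ne_two_sq (s + 1) t (by omega) h3
  · -- 0 ≤ s < t-1 : s² = 2t²-2t+1
    nlinarith [h, mul_self_le_mul_self f1 (show s ≤ t - 2 by omega)]
  · omega
  · -- s < 0 : (s-1)^2 = 2(t^2 - t + 1)
    have h2 : 2 * ((s - 1) ^ 2) = 2 * (2 * (t ^ 2 - t + 1)) := by linear_combination h
    have h3 : (s - 1) ^ 2 = 2 * (t ^ 2 - t + 1) := by linarith
    have A := sq_mod4 (s - 1)
    have B := sq_sub_self_even t
    obtain ⟨S, hS⟩ : ∃ S : ℤ, (s - 1) ^ 2 = S := ⟨_, rfl⟩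
    obtain ⟨T, hT⟩ : ∃ T : ℤ, t ^ 2 - t = T := ⟨_, rfl⟩
    rw [hS] at A h3
    rw [hT] at B
    rw [show t ^ 2 - t + 1 = T + 1 by omega] at h3
    omega



lemma F_inj (m p q t : ℕ) (hm : m = 2 * p + 1) (hqt : q + 1 = p + t) (ht : 3 ≤ t)
    (hmt : m = t * t) (x y : ℕ) (hx : x < m + 2) (hy : y < m + 2)
    (h : F m p q x = F m p q y) : x = y := by
  have h9 : 9 ≤ t * t := Nat.mul_le_mul ht ht
  have h2t : 2 * t ≤ t * t := Nat.mul_le_mul (by omega) (le_refl t)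
  have hpq : p < q := by omega
  have hqm : q < m := by omega
  have hmz : (m : ℤ) = 2 * (p : ℤ) + 1 := by omega
  have hqz : (q : ℤ) = (p : ℤ) + (t : ℤ) - 1 := by omega
  have htz : (3 : ℤ) ≤ (t : ℤ) := by omega
  have hmtz : (m : ℤ) = (t : ℤ) * (t : ℤ) := by exact_mod_cast hmt
  have hPT : 2 * (p : ℤ) + 1 = (t : ℤ) * (t : ℤ) := by linear_combination hmtz - hmz
  rcases (show x < m ∨ m = x ∨ m + 1 = x by omega) with hx1 | hx1 | hx1 <;>
    rcases (show y < m ∨ m = y ∨ m + 1 = y by omega) with hy1 | hy1 | hy1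
  · -- path / path
    unfold F F0 at h
    rw [if_neg (show ¬(x = m) by omega), if_neg (show ¬(x = m + 1) by omega),
      if_neg (show ¬(y = m) by omega), if_neg (show ¬(y = m + 1) by omega)] at h
    rw [show (x : ℤ) - (q : ℤ) = ((x : ℤ) - (p : ℤ)) - ((t : ℤ) - 1) by omega,
      show (y : ℤ) - (q : ℤ) = ((y : ℤ) - (p : ℤ)) - ((t : ℤ) - 1) by omega, hmz] at h
    have hcore : (x : ℤ) - (p : ℤ) = (y : ℤ) - (p : ℤ) :=
      core1 ((t : ℤ) - 1) _ _ (by omega) (by linear_combination h)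
    omega
  · -- path / leaf m
    exfalso
    rw [← hy1] at h
    unfold F F0 at h
    rw [if_neg (show ¬(x = m) by omega), if_neg (show ¬(x = m + 1) by omega),
      if_pos rfl] at h
    rw [show (x : ℤ) - (q : ℤ) = ((x : ℤ) - (p : ℤ)) - ((t : ℤ) - 1) by omega,
      hqz, hmz] at h
    exact core2 (t : ℤ) ((x : ℤ) - (p : ℤ)) htz (by linear_combination h + 2 * hPT)
  · -- path / leaf m+1
    exfalso
    rw [← hy1] at h
    unfold F F0 at h
    rw [if_neg (show ¬(x = m) by omega), if_neg (show ¬(x = m + 1) by omega),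
      if_neg (show ¬(m + 1 = m) by omega), if_pos rfl] at h
    rw [show (x : ℤ) - (q : ℤ) = ((x : ℤ) - (p : ℤ)) - ((t : ℤ) - 1) by omega,
      hqz, hmz] at h
    exact core3 (t : ℤ) ((x : ℤ) - (p : ℤ)) htz (by linear_combination h + 2 * hPT)
  · -- leaf m / path
    exfalso
    rw [← hx1] at h
    unfold F F0 at h
    rw [if_neg (show ¬(y = m) by omega), if_neg (show ¬(y = m + 1) by omega),
      if_pos rfl] at h
    rw [show (y : ℤ) - (q : ℤ) = ((y : ℤ) - (p : ℤ)) - ((t : ℤ) - 1) by omega,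
      hqz, hmz] at h
    exact core2 (t : ℤ) ((y : ℤ) - (p : ℤ)) htz (by linear_combination h.symm + 2 * hPT)
  · omega
  · -- leaf m / leaf m+1
    exfalso
    rw [← hx1, ← hy1] at h
    unfold F F0 at h
    rw [if_pos rfl, if_neg (show ¬(m + 1 = m) by omega), if_pos rfl] at h
    rw [hqz, hmz] at h
    have h6 : 2 * ((t : ℤ) - 1) ^ 2 = 0 := by linear_combination - h
    nlinarith [h6, htz]
  · -- leaf m+1 / path
    exfalso
    rw [← hx1] at h
    unfold F F0 at h
    rw [if_neg (show ¬(y = m) by omega), if_neg (show ¬(y = m + 1) by omega),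
      if_neg (show ¬(m + 1 = m) by omega), if_pos rfl] at h
    rw [show (y : ℤ) - (q : ℤ) = ((y : ℤ) - (p : ℤ)) - ((t : ℤ) - 1) by omega,
      hqz, hmz] at h
    exact core3 (t : ℤ) ((y : ℤ) - (p : ℤ)) htz (by linear_combination h.symm + 2 * hPT)
  · -- leaf m+1 / leaf m
    exfalso
    rw [← hx1, ← hy1] at h
    unfold F F0 at h
    rw [if_neg (show ¬(m + 1 = m) by omega), if_pos rfl, if_pos rfl] at h
    rw [hqz, hmz] at h
    have h6 : 2 * ((t : ℤ) - 1) ^ 2 = 0 := by linear_combination h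
    nlinarith [h6, htz]
  · omega

lemma main (m p q t : ℕ) (hm : m = 2 * p + 1) (hqt : q + 1 = p + t) (ht : 3 ≤ t)
    (hmt : m = t * t) : TransIrregular (caterpillar2 m (p + 1) (q + 1)) := by
  have h9 : 9 ≤ t * t := Nat.mul_le_mul ht ht
  have h2t : 2 * t ≤ t * t := Nat.mul_le_mul (by omega) (le_refl t)
  have hpq : p < q := by omega
  have hqm : q < m := by omega
  refine ⟨by rw [Fintype.card_fin]; omega, ?_⟩
  intro x y hxy
  have hX := two_tr m p q hpq hqm x
  have hY := two_tr m p q hpq hqm y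
  rw [hxy] at hX
  have hF : F m p q x.val = F m p q y.val := by rw [← hX, ← hY]
  exact Fin.ext (F_inj m p q t hm hqt ht hmt x.val y.val x.isLt y.isLt hF)

end CatAux

/-- for any odd `n ≥ 11` with `n - 2` a perfect square, the ordinary
caterpillar `C_{n-2}((n-1)/2, (n-3)/2 + √(n-2))` is transmission irregular. -/
theorem caterpillar_TI_of_odd_sq_sub_two (n : ℕ) (hodd : Odd n) (hn : 11 ≤ n)
    (hsq : IsPerfectSquare (n - 2)) :
    TransIrregular
      (caterpillar2 (n - 2) ((n - 1) / 2) ((n - 3) / 2 + Nat.sqrt (n - 2))) := by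
  obtain ⟨t, ht⟩ := hsq
  obtain ⟨k, hk⟩ := hodd
  have ht3 : 3 ≤ t := by
    rcases Nat.lt_or_ge t 3 with h | h
    · have : t * t ≤ 2 * 2 := Nat.mul_le_mul (by omega) (by omega)
      omega
    · exact h
  have hsqrt : Nat.sqrt (n - 2) = t := by rw [ht]; exact Nat.sqrt_eq t
  rw [hsqrt]
  have e1 : (n - 1) / 2 = (n - 3) / 2 + 1 := by omega
  have e2 : (n - 3) / 2 + t = ((n - 3) / 2 + t - 1) + 1 := by omega
  rw [e1, e2]
  exact CatAux.main (n - 2) ((n - 3) / 2) ((n - 3) / 2 + t - 1) t (by omega) (by omega) ht3 ht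
end
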